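/- arXiv:1510.08936 — 7 statements merged into one kernel-verified Lean document; each statement's English description precedes it below -/
import Mathlib

section
/- For every k > 0 and every ρ > 0 there are infinitely many N ∈ ℕ such that the difference set of C_N^k intersects B_ρ only in zero; that is, for all l, m ∈ ℤ³ with N − k ≤ |l|² ≤ N + k and N − k ≤ |m|² ≤ N + k, if |l − m|² ≤ ρ then l = m. -/
namespace GoodN


variable {R : Type*} [CommRing R]

def dot3 (a b : Fin 3 → R) : R := a 0 * b 0 + a 1 * b 1 + a 2 * b 2

def cross3 (a b : Fin 3 → R) : Fin 3 → R :=
  ![a 1 * b 2 - a 2 * b 1, a 2 * b 0 - a 0 * b 2, a 0 * b 1 - a 1 * b 0]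

lemma lagrange (a b : Fin 3 → R) :
    dot3 (cross3 a b) (cross3 a b) = dot3 a a * dot3 b b - (dot3 a b)^2 := by
  simp [dot3, cross3]; ring

lemma dot3_cross_right (a b : Fin 3 → R) : dot3 (cross3 a b) b = 0 := by
  simp [dot3, cross3]; ring

/-- key mod-p geometry lemma -/
lemma keyB {p : ℕ} [Fact p.Prime] {e : ℤ} (hsq : ¬ IsSquare ((-e : ℤ) : ZMod p))
    (u d : Fin 3 → ℤ) (hd : dot3 d d = e) (hud : dot3 u d = 0)
    (hdvd : (p:ℤ) ∣ dot3 u u) : (p:ℤ)^2 ∣ dot3 u u := by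
  set U : Fin 3 → ZMod p := fun i => ((u i : ℤ) : ZMod p) with hU
  set D : Fin 3 → ZMod p := fun i => ((d i : ℤ) : ZMod p) with hD
  have hUU : dot3 U U = 0 := by
    have : ((dot3 u u : ℤ) : ZMod p) = 0 := by
      rwa [ZMod.intCast_zmod_eq_zero_iff_dvd]
    simpa [dot3, hU] using this
  have hUD : dot3 U D = 0 := by
    have : ((dot3 u d : ℤ) : ZMod p) = 0 := by rw [hud]; simp
    simpa [dot3, hU, hD] using this
  have hDD : dot3 D D = ((e : ℤ) : ZMod p) := by
    rw [← hd]; simp [dot3, hU, hD]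
  by_cases h0 : ∀ i, U i = 0
  · -- all coordinates divisible by p
    have hc : ∀ i, (p:ℤ) ∣ u i := by
      intro i
      have := h0 i
      rwa [hU, ZMod.intCast_zmod_eq_zero_iff_dvd] at this
    obtain ⟨a0, h0'⟩ := hc 0
    obtain ⟨a1, h1'⟩ := hc 1
    obtain ⟨a2, h2'⟩ := hc 2
    refine ⟨a0^2 + a1^2 + a2^2, ?_⟩
    simp only [dot3, h0', h1', h2']; ring
  · push_neg at h0
    obtain ⟨i, hi⟩ := h0
    exfalso
    apply hsq
    set W : Fin 3 → ZMod p := cross3 U D with hW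
    have key : ∀ j, (W j)^2 = -(dot3 D D) * (U j)^2 := by
      intro j
      have c0 : W 0 = U 1 * D 2 - U 2 * D 1 := by simp [hW, cross3]
      have c1 : W 1 = U 2 * D 0 - U 0 * D 2 := by simp [hW, cross3]
      have c2 : W 2 = U 0 * D 1 - U 1 * D 0 := by simp [hW, cross3]
      simp only [dot3] at *
      fin_cases j
      · show W 0 ^ 2 = -(D 0 * D 0 + D 1 * D 1 + D 2 * D 2) * U 0 ^ 2
        rw [c0]
        linear_combination (D 1^2 + D 2^2) * hUU + (2 * U 0 * D 0 - (U 0 * D 0 + U 1 * D 1 + U 2 * D 2)) * hUD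
      · show W 1 ^ 2 = -(D 0 * D 0 + D 1 * D 1 + D 2 * D 2) * U 1 ^ 2
        rw [c1]
        linear_combination (D 0^2 + D 2^2) * hUU + (2 * U 1 * D 1 - (U 0 * D 0 + U 1 * D 1 + U 2 * D 2)) * hUD
      · show W 2 ^ 2 = -(D 0 * D 0 + D 1 * D 1 + D 2 * D 2) * U 2 ^ 2
        rw [c2]
        linear_combination (D 0^2 + D 1^2) * hUU + (2 * U 2 * D 2 - (U 0 * D 0 + U 1 * D 1 + U 2 * D 2)) * hUD
    refine ⟨W i * (U i)⁻¹, ?_⟩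
    have h2 := key i
    rw [hDD] at h2
    push_cast at h2 ⊢
    field_simp
    linear_combination -h2




lemma not_isSquare_neg (E p : ℕ) (hE : 2 ≤ E) (hpp : p.Prime)
    (hp : (p : ZMod (4 * (Nat.factorial E))) = -1) {e : ℤ} (he1 : 1 ≤ e) (heE : e ≤ (E : ℤ)) :
    ¬ IsSquare ((-e : ℤ) : ZMod p) := by
  haveI : Fact p.Prime := ⟨hpp⟩
  have hM : 0 < 4 * (Nat.factorial E) := by positivity
  haveI : NeZero (4 * (Nat.factorial E)) := ⟨by omega⟩
  have reduce : ∀ d : ℕ, 0 < d → d ∣ 4 * (Nat.factorial E) → (p : ZMod d) = -1 := by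
    intro d hd0 hd
    have := congrArg (ZMod.castHom hd (ZMod d)) hp
    rwa [map_natCast, map_neg, map_one] at this
  have h4 : (p : ZMod 4) = -1 := reduce 4 (by norm_num) ⟨(Nat.factorial E), rfl⟩
  have hp4 : p % 4 = 3 := by
    have := ZMod.val_natCast (n := 4) p
    rw [h4] at this
    simpa using this.symm
  have h8d : (8 : ℕ) ∣ 4 * (Nat.factorial E) := by
    have h2 : (2:ℕ) ∣ (Nat.factorial E) := Nat.dvd_factorial (by norm_num) hE
    omega
  have hp8 : p % 8 = 7 := by
    have h8 : (p : ZMod 8) = -1 := reduce 8 (by norm_num) h8d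
    have := ZMod.val_natCast (n := 8) p
    rw [h8] at this
    simpa using this.symm
  have hp2 : p ≠ 2 := by omega
  have hpbig : E < p := by
    by_contra hle
    push_neg at hle
    have hdvd : p ∣ 4 * (Nat.factorial E) :=
      Dvd.dvd.mul_left (Nat.dvd_factorial hpp.pos hle) 4
    have h0 := reduce p hpp.pos hdvd
    rw [ZMod.natCast_self] at h0
    haveI : Fact p.Prime := ⟨hpp⟩
    exact one_ne_zero (by linear_combination h0 : (1 : ZMod p) = 0)
  -- every prime q ≤ E is a square mod p
  have prime_case : ∀ q : ℕ, q.Prime → q ≤ E → IsSquare ((q : ZMod p)) := by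
    intro q hq hqE
    haveI : Fact q.Prime := ⟨hq⟩
    have hpq : p ≠ q := by omega
    rcases eq_or_ne q 2 with h2 | h2
    · subst h2
      rw [show ((2:ℕ) : ZMod p) = (2 : ZMod p) by norm_num]
      exact (ZMod.exists_sq_eq_two_iff hp2).mpr (Or.inr hp8)
    · have hqd : q ∣ 4 * (Nat.factorial E) := Dvd.dvd.mul_left (Nat.dvd_factorial hq.pos hqE) 4
      have hq_neg : (p : ZMod q) = -1 := reduce q hq.pos hqd
      have hq_odd : q % 2 = 1 := Nat.Prime.eq_two_or_odd hq |>.resolve_left h2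
      have hq4 : q % 4 = 1 ∨ q % 4 = 3 := by omega
      rcases hq4 with hq4 | hq4
      · have := (ZMod.exists_sq_eq_prime_iff_of_mod_four_eq_one (p := q) (q := p) hq4 hp2).mp
        apply this
        rw [hq_neg]
        rw [ZMod.exists_sq_eq_neg_one_iff]
        omega
      · rw [ZMod.exists_sq_eq_prime_iff_of_mod_four_eq_three hp4 hq4 hpq, hq_neg,
          ZMod.exists_sq_eq_neg_one_iff]
        omega
  -- every 1 ≤ e' ≤ E is a square mod p
  have sq_all : ∀ e' : ℕ, 1 ≤ e' → e' ≤ E → IsSquare ((e' : ZMod p)) := by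
    intro e'
    induction e' using Nat.strong_induction_on with
    | _ e' ih =>
      intro h1 hE'
      rcases eq_or_lt_of_le h1 with h | h
      · rw [← h, Nat.cast_one]; exact IsSquare.one
      · obtain ⟨q, hq, hqd⟩ := Nat.exists_prime_and_dvd (by omega : e' ≠ 1)
        obtain ⟨f, hf⟩ := hqd
        have hq2 : 2 ≤ q := hq.two_le
        have hf1 : 1 ≤ f := by
          rcases Nat.eq_zero_or_pos f with h0 | h0
          · rw [h0, mul_zero] at hf; omega
          · exact h0
        have hqe : q ≤ e' := by nlinarith
        have hfe : f < e' := by nlinarith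
        have s1 : IsSquare ((q : ZMod p)) := prime_case q hq (le_trans hqe hE')
        have hfE : f ≤ E := le_trans (le_of_lt hfe) hE'
        have s2 : IsSquare ((f : ZMod p)) := ih f hfe hf1 hfE
        rw [hf]
        push_cast
        exact s1.mul s2
  -- conclude
  intro hcon
  obtain ⟨a, ha⟩ := hcon
  have heq : ((-e : ℤ) : ZMod p) = -((e.toNat : ℕ) : ZMod p) := by
    have h' : ((e.toNat : ℕ) : ℤ) = e := Int.toNat_of_nonneg (by omega)
    have h2 : ((e.toNat : ℕ) : ZMod p) = ((e : ℤ) : ZMod p) := by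
      rw [← Int.cast_natCast, h']
    rw [h2]
    push_cast
    ring
  obtain ⟨b, hb⟩ := sq_all e.toNat (by omega) (by omega)
  have hbne : ((e.toNat : ℕ) : ZMod p) ≠ 0 := by
    rw [Ne, ZMod.natCast_eq_zero_iff]
    intro hdvd
    have := Nat.le_of_dvd (by omega) hdvd
    omega
  have hb0 : b ≠ 0 := by
    intro h; rw [h, mul_zero] at hb; exact hbne hb
  have : IsSquare (-1 : ZMod p) := by
    refine ⟨a * b⁻¹, ?_⟩
    rw [show (a * b⁻¹) * (a * b⁻¹) = (a * a) * (b * b)⁻¹ by rw [mul_inv]; ring,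
      ← ha, ← hb, heq, neg_mul, mul_inv_cancel₀ hbne]
  rw [ZMod.exists_sq_eq_neg_one_iff] at this
  omega


lemma E_lt_p (E p : ℕ) (hpp : p.Prime)
    (hp : (p : ZMod (4 * (Nat.factorial E))) = -1) : E < p := by
  by_contra hle
  push_neg at hle
  have hdvd : p ∣ 4 * (Nat.factorial E) :=
    Dvd.dvd.mul_left (Nat.dvd_factorial hpp.pos hle) 4
  have h0 := hp
  rw [show ((p : ℕ) : ZMod (4 * Nat.factorial E)) = ((p : ℕ) : ZMod (4 * Nat.factorial E)) from rfl] at h0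
  -- reduce mod p
  have h1 := congrArg (ZMod.castHom hdvd (ZMod p)) h0
  rw [map_natCast, map_neg, map_one, ZMod.natCast_self] at h1
  haveI : Fact p.Prime := ⟨hpp⟩
  exact one_ne_zero (by linear_combination h1 : (1 : ZMod p) = 0)

lemma crt_lemma (E : ℕ) (hE : 2 ≤ E) (L : List (ℤ × ℤ × ℤ))
    (hL : ∀ x ∈ L, 1 ≤ x.1 ∧ x.1 ≤ (E : ℤ)) :
    ∃ m r : ℕ, 0 < m ∧ ∀ N : ℕ, N % m = r % m → ∀ x ∈ L,
      ∃ p : ℕ, p.Prime ∧ ¬ IsSquare ((-x.1 : ℤ) : ZMod p) ∧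
        (p : ℤ) ∣ (x.1 * ((N : ℤ) + x.2.1) - x.2.2 ^ 2) ∧
        ¬ ((p : ℤ)^2 ∣ (x.1 * ((N : ℤ) + x.2.1) - x.2.2 ^ 2)) := by
  induction L with
  | nil => exact ⟨1, 0, one_pos, by simp⟩
  | cons x L ih =>
    obtain ⟨m, r, hm, H⟩ := ih (fun y hy => hL y (List.mem_cons_of_mem _ hy))
    obtain ⟨he1, heE⟩ := hL x List.mem_cons_self
    haveI : NeZero (4 * (Nat.factorial E)) := ⟨by positivity⟩
    have hu : IsUnit (-1 : ZMod (4 * Nat.factorial E)) := isUnit_one.neg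
    obtain ⟨p, hpm, hpp, hpmod⟩ := Nat.forall_exists_prime_gt_and_eq_mod hu m
    haveI : Fact p.Prime := ⟨hpp⟩
    obtain ⟨e, j, c⟩ := x
    simp only at he1 heE ⊢
    have hEp : E < p := E_lt_p E p hpp hpmod
    have hsq : ¬ IsSquare ((-e : ℤ) : ZMod p) := not_isSquare_neg E p hE hpp hpmod he1 heE
    have hp2 : (2:ℕ) ≤ p := hpp.two_le
    -- coprimality of e and p^2 over ℤ
    have hpe : ¬ ((p:ℕ) ∣ e.toNat) := by
      intro hdvd
      have := Nat.le_of_dvd (by omega) hdvd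
      omega
    have hcop : IsCoprime (e : ℤ) ((p : ℤ)^2) := by
      have h1 : Nat.Coprime e.toNat (p^2) :=
        Nat.Coprime.pow_right 2 ((hpp.coprime_iff_not_dvd.mpr hpe).symm)
      have h2 : IsCoprime ((e.toNat : ℕ) : ℤ) (((p^2 : ℕ) : ℕ) : ℤ) :=
        Nat.isCoprime_iff_coprime.mpr h1
      have he' : ((e.toNat : ℕ) : ℤ) = e := Int.toNat_of_nonneg (by omega)
      have hc : (((p^2 : ℕ) : ℕ) : ℤ) = (p : ℤ)^2 := by push_cast; ring
      rw [he', hc] at h2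
      exact h2
    obtain ⟨a, b, hab⟩ := hcop
    set t : ℤ := c^2 + p - e * j with ht
    set n₀ : ℤ := a * t with hn₀
    have hdvd1 : ((p:ℤ)^2) ∣ e * n₀ - t := ⟨-(t * b), by linear_combination t * hab⟩
    set b' : ℕ := (n₀ % ((p:ℤ)^2)).toNat with hb'
    have hp2ne : ((p:ℤ)^2) ≠ 0 := by positivity
    have hb'cast : (b' : ℤ) = n₀ % ((p:ℤ)^2) :=
      Int.toNat_of_nonneg (Int.emod_nonneg _ hp2ne)
    have hb'mod : (b' : ℤ) ≡ n₀ [ZMOD ((p:ℤ)^2)] := by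
      rw [hb'cast]
      show (n₀ % ((p:ℤ)^2)) % ((p:ℤ)^2) = n₀ % ((p:ℤ)^2)
      exact Int.emod_emod_of_dvd n₀ dvd_rfl
    have hcopm : Nat.Coprime m (p^2) := by
      have h1 : ¬ (p ∣ m) := fun hd => by have := Nat.le_of_dvd (by omega) hd; omega
      exact Nat.Coprime.pow_right 2 ((hpp.coprime_iff_not_dvd.mpr h1).symm)
    obtain ⟨k, hk1, hk2⟩ := Nat.chineseRemainder hcopm r b'
    refine ⟨m * p^2, k, by positivity, ?_⟩
    intro N hN y hy
    have hNk : N ≡ k [MOD m * p^2] := hN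
    rcases List.mem_cons.mp hy with hy | hy
    · -- the new triple
      subst hy
      refine ⟨p, hpp, hsq, ?_, ?_⟩
      · -- p ∣ v
        have hNp : N ≡ b' [MOD p^2] :=
          (hNk.of_dvd (dvd_mul_left (p^2) m)).trans hk2
        have hNint : (N : ℤ) ≡ n₀ [ZMOD ((p:ℤ)^2)] := by
          have := Int.natCast_modEq_iff.mpr hNp
          push_cast at this
          exact this.trans hb'mod
        have hv : (e * ((N:ℤ) + j) - c^2) ≡ p [ZMOD ((p:ℤ)^2)] := by
          calc e * ((N:ℤ) + j) - c^2 ≡ e * (n₀ + j) - c^2 [ZMOD ((p:ℤ)^2)] := by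
                exact ((hNint.add_right j).mul_left e).sub_right (c^2)
            _ ≡ p [ZMOD ((p:ℤ)^2)] := by
                have h1 : e * (n₀ + j) - c^2 - p = e * n₀ - t := by rw [ht]; ring
                have h2 : ((p:ℤ)^2) ∣ (e * (n₀ + j) - c^2 - p) := h1 ▸ hdvd1
                have h3 : ((p:ℤ)^2) ∣ ((p:ℤ) - (e * (n₀ + j) - c^2)) := by
                  have := dvd_neg.mpr h2
                  rwa [neg_sub] at this
                exact Int.modEq_iff_dvd.mpr h3
        have hdv : ((p:ℤ)^2) ∣ ((p:ℤ) - (e * ((N:ℤ) + j) - c^2)) := Int.ModEq.dvd hv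
        have hpp2 : (p:ℤ) ∣ ((p:ℤ)^2) := dvd_pow_self _ two_ne_zero
        exact (dvd_sub_right (dvd_refl (p:ℤ))).mp (dvd_trans hpp2 hdv)
      · -- ¬ p^2 ∣ v
        intro hcon
        have hNp : N ≡ b' [MOD p^2] :=
          (hNk.of_dvd (dvd_mul_left (p^2) m)).trans hk2
        have hNint : (N : ℤ) ≡ n₀ [ZMOD ((p:ℤ)^2)] := by
          have := Int.natCast_modEq_iff.mpr hNp
          push_cast at this
          exact this.trans hb'mod
        have hv : (e * ((N:ℤ) + j) - c^2) ≡ p [ZMOD ((p:ℤ)^2)] := by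
          calc e * ((N:ℤ) + j) - c^2 ≡ e * (n₀ + j) - c^2 [ZMOD ((p:ℤ)^2)] := by
                exact ((hNint.add_right j).mul_left e).sub_right (c^2)
            _ ≡ p [ZMOD ((p:ℤ)^2)] := by
                have h1 : e * (n₀ + j) - c^2 - p = e * n₀ - t := by rw [ht]; ring
                have h2 : ((p:ℤ)^2) ∣ (e * (n₀ + j) - c^2 - p) := h1 ▸ hdvd1
                have h3 : ((p:ℤ)^2) ∣ ((p:ℤ) - (e * (n₀ + j) - c^2)) := by
                  have := dvd_neg.mpr h2
                  rwa [neg_sub] at this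
                exact Int.modEq_iff_dvd.mpr h3
        have hdv : ((p:ℤ)^2) ∣ ((p:ℤ) - (e * ((N:ℤ) + j) - c^2)) := Int.ModEq.dvd hv
        have hpdvd : ((p:ℤ)^2) ∣ (p:ℤ) := by
          have := dvd_add hdv hcon
          simpa using this
        have hle := Int.le_of_dvd (by positivity) hpdvd
        have : (2:ℤ) ≤ (p:ℤ) := by exact_mod_cast hp2
        nlinarith
    · -- old triples
      have hNm : N % m = r % m := (hNk.of_dvd (dvd_mul_right m (p^2))).trans hk1
      exact H N hNm y hy


end GoodN


/-- Squared Euclidean norm on `ℤ³`. -/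
def znormSq (j : Fin 3 → ℤ) : ℝ := ∑ i, ((j i : ℝ))^2

lemma znormSq_eq (l : Fin 3 → ℤ) : znormSq l = ((GoodN.dot3 l l : ℤ) : ℝ) := by
  simp [znormSq, GoodN.dot3, Fin.sum_univ_three]
  push_cast
  ring

set_option maxHeartbeats 2000000 in
/-- For every `k > 0` and every `ρ > 0` there are infinitely many `N ∈ ℕ` such that the
difference set of `C_N^k = {l ∈ ℤ³ : N − k ≤ |l|² ≤ N + k}` intersects
`B_ρ = {l : |l|² ≤ ρ}` only in zero. -/
theorem infinitely_many_good_N (k ρ : ℝ) (hk : 0 < k) (hρ : 0 < ρ) :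
    {N : ℕ | ∀ l m : Fin 3 → ℤ,
      ((N : ℝ) - k ≤ znormSq l ∧ znormSq l ≤ (N : ℝ) + k) →
      ((N : ℝ) - k ≤ znormSq m ∧ znormSq m ≤ (N : ℝ) + k) →
      znormSq (l - m) ≤ ρ → l = m}.Infinite := by
  classical
  set E : ℕ := max 2 ⌈ρ⌉₊ with hEdef
  have hE2 : 2 ≤ E := le_max_left _ _
  set K : ℕ := ⌈k⌉₊ with hKdef
  have hkK : k ≤ (K : ℝ) := Nat.le_ceil k
  have hρE : ρ ≤ (E : ℝ) := le_trans (Nat.le_ceil ρ) (by exact_mod_cast le_max_right 2 ⌈ρ⌉₊)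
  set B : ℤ := (K : ℤ) + (E : ℤ) with hBdef
  set L : List (ℤ × ℤ × ℤ) :=
    ((Finset.Icc (1:ℤ) (E:ℤ)) ×ˢ ((Finset.Icc (-(K:ℤ)) (K:ℤ)) ×ˢ (Finset.Icc (-B) B))).toList
    with hLdef
  have hL : ∀ x ∈ L, 1 ≤ x.1 ∧ x.1 ≤ (E:ℤ) := by
    intro x hx
    rw [hLdef, Finset.mem_toList, Finset.mem_product] at hx
    have := hx.1
    rw [Finset.mem_Icc] at this
    exact this
  obtain ⟨m, r, hm, H⟩ := GoodN.crt_lemma E hE2 L hL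
  have hinf : {N : ℕ | N % m = r % m}.Infinite := by
    have hinj : Function.Injective (fun t : ℕ => r + t * m) := by
      intro s t hst
      simp only at hst
      have : s * m = t * m := by omega
      exact Nat.eq_of_mul_eq_mul_right hm this
    exact Set.infinite_of_injective_forall_mem hinj
      (fun t => by simp [Nat.add_mul_mod_self_right])
  apply hinf.mono
  intro N hN
  simp only [Set.mem_setOf_eq] at hN ⊢
  intro l m' h1 h2 h3
  by_contra hne
  set d : Fin 3 → ℤ := l - m' with hddef
  have hld : l = m' + d := by funext i; simp [hddef]
  set e : ℤ := GoodN.dot3 d d with hedef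
  have he0 : 0 ≤ e := by
    rw [hedef]; simp only [GoodN.dot3]
    nlinarith [mul_self_nonneg (d 0), mul_self_nonneg (d 1), mul_self_nonneg (d 2)]
  have hene : e ≠ 0 := by
    intro h0
    rw [hedef] at h0
    simp only [GoodN.dot3] at h0
    have hdd := h0
    have h00 : d 0 = 0 := by nlinarith [mul_self_nonneg (d 0), mul_self_nonneg (d 1), mul_self_nonneg (d 2)]
    have h11 : d 1 = 0 := by nlinarith [mul_self_nonneg (d 0), mul_self_nonneg (d 1), mul_self_nonneg (d 2)]
    have h22 : d 2 = 0 := by nlinarith [mul_self_nonneg (d 0), mul_self_nonneg (d 1), mul_self_nonneg (d 2)]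
    apply hne
    have : d = 0 := by
      funext i
      fin_cases i <;> assumption
    rw [hddef] at this
    exact sub_eq_zero.mp this
  have he1 : 1 ≤ e := by omega
  have heE : e ≤ (E : ℤ) := by
    have : (e : ℝ) ≤ (E : ℝ) := by
      calc (e : ℝ) = znormSq (l - m') := by
            rw [znormSq_eq, ← hddef, ← hedef]
        _ ≤ ρ := h3
        _ ≤ (E : ℝ) := hρE
    exact_mod_cast this
  set n : ℤ := GoodN.dot3 m' m' with hndef
  set j : ℤ := n - N with hjdef
  have hnR : ((n : ℤ) : ℝ) = znormSq m' := (znormSq_eq m').symm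
  have hjK : -(K:ℤ) ≤ j ∧ j ≤ (K:ℤ) := by
    constructor
    · have : -(K : ℝ) ≤ ((j : ℤ) : ℝ) := by
        push_cast [hjdef]
        rw [hnR]
        have := h2.1
        linarith
      exact_mod_cast this
    · have : ((j : ℤ) : ℝ) ≤ (K : ℝ) := by
        push_cast [hjdef]
        rw [hnR]
        have := h2.2
        linarith
      exact_mod_cast this
  set c : ℤ := GoodN.dot3 m' d with hcdef
  have hll : GoodN.dot3 l l = n + 2*c + e := by
    rw [hld, hndef, hcdef, hedef]
    simp [GoodN.dot3]
    ring
  have h2ce : -(2*(K:ℤ)) ≤ 2*c + e ∧ 2*c + e ≤ 2*(K:ℤ) := by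
    have hlR : ((GoodN.dot3 l l : ℤ) : ℝ) = znormSq l := (znormSq_eq l).symm
    constructor
    · have : -(2*(K:ℝ)) ≤ ((2*c + e : ℤ) : ℝ) := by
        have hc1 := h1.1
        have hc2 := h2.2
        rw [← hlR] at hc1
        rw [← hnR] at hc2
        have : ((GoodN.dot3 l l : ℤ) : ℝ) - ((n:ℤ):ℝ) ≥ -(2*k) := by linarith
        rw [hll] at this
        push_cast at this ⊢
        linarith
      exact_mod_cast this
    · have : ((2*c + e : ℤ) : ℝ) ≤ 2*(K:ℝ) := by
        have hc1 := h1.2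
        have hc2 := h2.1
        rw [← hlR] at hc1
        rw [← hnR] at hc2
        have : ((GoodN.dot3 l l : ℤ) : ℝ) - ((n:ℤ):ℝ) ≤ 2*k := by linarith
        rw [hll] at this
        push_cast at this ⊢
        linarith
      exact_mod_cast this
  have hcB : -B ≤ c ∧ c ≤ B := by
    rw [hBdef]
    omega
  have hxL : ((e, j, c) : ℤ × ℤ × ℤ) ∈ L := by
    rw [hLdef, Finset.mem_toList, Finset.mem_product, Finset.mem_product]
    refine ⟨Finset.mem_Icc.mpr ⟨he1, heE⟩, Finset.mem_Icc.mpr ⟨hjK.1, hjK.2⟩,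
      Finset.mem_Icc.mpr ⟨hcB.1, hcB.2⟩⟩
  obtain ⟨p, hpp, hsq, hdvd, hndvd⟩ := H N hN (e, j, c) hxL
  haveI : Fact p.Prime := ⟨hpp⟩
  simp only at hdvd hndvd hsq
  set u : Fin 3 → ℤ := GoodN.cross3 m' d with hudef
  have hval : GoodN.dot3 u u = e * ((N:ℤ) + j) - c^2 := by
    rw [hudef, GoodN.lagrange, ← hndef, ← hcdef, ← hedef, hjdef]
    ring
  apply hndvd
  rw [← hval]
  exact GoodN.keyB hsq u d rfl (GoodN.dot3_cross_right m' d) (by rw [hval]; exact hdvd)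
end

section
/- Let λ, θ ∈ ℝ with λ ≠ θ. Suppose v : ℝ → ℂ is differentiable, h : ℝ → ℂ is measurable, v′(t) + λ v(t) = h(t) for all t ∈ ℝ, and both t ↦ e^{θt} v(t) and t ↦ e^{θt} h(t) are square integrable over ℝ. Then ∫_ℝ e^{2θt} |v(t)|² dt ≤ (λ − θ)⁻² ∫_ℝ e^{2θt} |h(t)|² dt. -/
open MeasureTheory

/-- Single-Fourier-mode estimate for the linear problem `v' + λ v = h` in the weighted
space `L²_θ(ℝ)`: if `e^{θt} v` and `e^{θt} h` are square integrable over `ℝ`, then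
`∫ e^{2θt}|v|² dt ≤ (λ − θ)⁻² ∫ e^{2θt}|h|² dt`. -/
theorem weighted_mode_estimate (lam θ : ℝ) (hne : lam ≠ θ) (v h : ℝ → ℂ)
    (hv : Differentiable ℝ v) (hh : Measurable h)
    (hode : ∀ t : ℝ, deriv v t + (lam : ℂ) * v t = h t)
    (hvint : Integrable (fun t : ℝ => Real.exp (2 * θ * t) * ‖v t‖ ^ 2))
    (hhint : Integrable (fun t : ℝ => Real.exp (2 * θ * t) * ‖h t‖ ^ 2)) :
    (∫ t : ℝ, Real.exp (2 * θ * t) * ‖v t‖ ^ 2) ≤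
      ((lam - θ) ^ 2)⁻¹ * ∫ t : ℝ, Real.exp (2 * θ * t) * ‖h t‖ ^ 2 := by
  set μ : ℝ := lam - θ with hμdef
  have hμ : μ ≠ 0 := sub_ne_zero.2 hne
  have hμpos : 0 < |μ| := abs_pos.2 hμ
  have hm2 : |μ| * |μ| = μ ^ 2 := by rw [← abs_mul, ← sq, abs_sq]
  -- the weighted functions
  set w : ℝ → ℂ := fun t => (Real.exp (θ * t) : ℂ) * v t with hwdef
  set g : ℝ → ℂ := fun t => (Real.exp (θ * t) : ℂ) * h t with hgdef
  set f : ℝ → ℝ := fun t => (w t).re ^ 2 + (w t).im ^ 2 with hfdef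
  set G : ℝ → ℝ := fun t => (g t).re ^ 2 + (g t).im ^ 2 with hGdef
  set p : ℝ → ℝ := fun t => (w t).re * (g t).re + (w t).im * (g t).im with hpdef
  -- the exponential factor and its derivative
  have hEt : ∀ t : ℝ, HasDerivAt (fun s : ℝ => Real.exp (θ * s)) (θ * Real.exp (θ * t)) t := by
    intro t
    have := (Real.hasDerivAt_exp (θ * t)).comp t ((hasDerivAt_id t).const_mul θ)
    simpa [mul_comm, Function.comp_def] using this
  -- identification of the integrands
  have hsq : ∀ (z : ℂ) (t : ℝ),
      ((Real.exp (θ * t) : ℂ) * z).re ^ 2 + ((Real.exp (θ * t) : ℂ) * z).im ^ 2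
        = Real.exp (2 * θ * t) * ‖z‖ ^ 2 := by
    intro z t
    have h1 : Real.exp (2 * θ * t) = Real.exp (θ * t) * Real.exp (θ * t) := by
      rw [← Real.exp_add]; ring_nf
    have h2 : ‖z‖ ^ 2 = z.re ^ 2 + z.im ^ 2 := by
      rw [Complex.sq_norm, Complex.normSq_apply]; ring
    simp only [Complex.mul_re, Complex.mul_im, Complex.ofReal_re, Complex.ofReal_im]
    rw [h1, h2]; ring
  have hfv : (fun t : ℝ => Real.exp (2 * θ * t) * ‖v t‖ ^ 2) = f := by
    funext t; rw [hfdef]; exact (hsq (v t) t).symm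
  have hGh : (fun t : ℝ => Real.exp (2 * θ * t) * ‖h t‖ ^ 2) = G := by
    funext t; rw [hGdef]; exact (hsq (h t) t).symm
  rw [hfv, hGh]
  have hfint : Integrable f := hfv ▸ hvint
  have hGint : Integrable G := hGh ▸ hhint
  -- derivative of w
  have hw : ∀ t : ℝ, HasDerivAt w (g t - (μ : ℂ) * w t) t := by
    intro t
    have hD := ((hEt t).ofReal_comp).mul ((hv t).hasDerivAt)
    have hvd : deriv v t = h t - (lam : ℂ) * v t := eq_sub_of_add_eq (hode t)
    refine HasDerivAt.congr_deriv (f := w) hD ?_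
    rw [hvd, hgdef, hwdef, hμdef]
    push_cast
    ring
  -- derivative of f
  have hf' : ∀ t : ℝ, HasDerivAt f (-(2 * μ) * f t + 2 * p t) t := by
    intro t
    have hre : HasDerivAt (fun s => (w s).re) ((g t - (μ : ℂ) * w t).re) t :=
      Complex.reCLM.hasFDerivAt.comp_hasDerivAt t (hw t)
    have him : HasDerivAt (fun s => (w s).im) ((g t - (μ : ℂ) * w t).im) t :=
      Complex.imCLM.hasFDerivAt.comp_hasDerivAt t (hw t)
    have hD := ((hre.mul hre).add (him.mul him))
    have : HasDerivAt f
        ((g t - (μ : ℂ) * w t).re * (w t).re + (w t).re * (g t - (μ : ℂ) * w t).re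
          + ((g t - (μ : ℂ) * w t).im * (w t).im + (w t).im * (g t - (μ : ℂ) * w t).im)) t := by
      simpa [hfdef, sq, Pi.mul_def, Pi.add_def] using hD
    convert this using 1
    simp only [Complex.sub_re, Complex.sub_im, Complex.mul_re, Complex.mul_im,
      Complex.ofReal_re, Complex.ofReal_im, hfdef, hpdef]
    ring
  -- measurability of p
  have hwmeas : Measurable w :=
    ((Complex.measurable_ofReal.comp (Real.measurable_exp.comp (measurable_const.mul
      measurable_id))).mul (hv.continuous.measurable))
  have hgmeas : Measurable g :=
    ((Complex.measurable_ofReal.comp (Real.measurable_exp.comp (measurable_const.mul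
      measurable_id))).mul hh)
  have hpmeas : Measurable p :=
    ((Complex.measurable_re.comp hwmeas).mul (Complex.measurable_re.comp hgmeas)).add
      ((Complex.measurable_im.comp hwmeas).mul (Complex.measurable_im.comp hgmeas))
  -- pointwise bound on p
  set bound : ℝ → ℝ := fun t => (μ ^ 2 * f t + G t) / (2 * |μ|) with hbdef
  have hbound : ∀ t : ℝ, |p t| ≤ bound t := by
    intro t
    have key : 2 * |μ| * |p t| ≤ μ ^ 2 * f t + G t := by
      have e1 : p t = (w t).re * (g t).re + (w t).im * (g t).im := rfl
      have e2 : f t = (w t).re ^ 2 + (w t).im ^ 2 := rfl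
      have e3 : G t = (g t).re ^ 2 + (g t).im ^ 2 := rfl
      rw [e1, e2, e3]
      rcases abs_cases ((w t).re * (g t).re + (w t).im * (g t).im) with ⟨hpe, _⟩ | ⟨hpe, _⟩ <;>
        rw [hpe]
      · nlinarith [sq_nonneg (|μ| * (w t).re - (g t).re), sq_nonneg (|μ| * (w t).im - (g t).im),
          hm2, hμpos]
      · nlinarith [sq_nonneg (|μ| * (w t).re + (g t).re), sq_nonneg (|μ| * (w t).im + (g t).im),
          hm2, hμpos]
    show |p t| ≤ (μ ^ 2 * f t + G t) / (2 * |μ|)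
    rw [le_div_iff₀ (by positivity)]
    linarith
  have hbint : Integrable bound := ((hfint.const_mul (μ ^ 2)).add hGint).div_const (2 * |μ|)
  have hpint : Integrable p :=
    Integrable.mono' hbint hpmeas.aestronglyMeasurable
      (Filter.Eventually.of_forall fun t => by simpa using hbound t)
  -- the derivative of f is integrable
  have hf'int : Integrable (fun t => -(2 * μ) * f t + 2 * p t) :=
    (hfint.const_mul _).add (hpint.const_mul _)
  -- fundamental theorem of calculus: ∫ f' = 0
  have hzero : (∫ t : ℝ, (-(2 * μ) * f t + 2 * p t)) = 0 :=
    integral_eq_zero_of_hasDerivAt_of_integrable hf' hf'int hfint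
  have hsplit : (∫ t : ℝ, (-(2 * μ) * f t + 2 * p t))
      = -(2 * μ) * (∫ t, f t) + 2 * ∫ t, p t := by
    rw [integral_add (hfint.const_mul _) (hpint.const_mul _), integral_const_mul,
      integral_const_mul]
  have hkey : μ * ∫ t, f t = ∫ t, p t := by
    rw [hsplit] at hzero; linarith
  -- integral estimates
  have hInonneg : 0 ≤ ∫ t, f t := integral_nonneg fun t => by positivity
  have hJnonneg : 0 ≤ ∫ t, G t := integral_nonneg fun t => by positivity
  have habs : |∫ t, p t| ≤ ∫ t, |p t| := by
    simpa using norm_integral_le_integral_norm p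
  have hmono : (∫ t, |p t|) ≤ ∫ t, bound t := integral_mono hpint.abs hbint hbound
  have hbval : (∫ t, bound t) = (μ ^ 2 * (∫ t, f t) + ∫ t, G t) / (2 * |μ|) := by
    rw [hbdef]
    simp only [div_eq_mul_inv]
    rw [integral_mul_const, integral_add (hfint.const_mul _) hGint, integral_const_mul]
  have hchain : |μ| * (∫ t, f t) ≤ (μ ^ 2 * (∫ t, f t) + ∫ t, G t) / (2 * |μ|) := by
    calc |μ| * (∫ t, f t) = |μ * ∫ t, f t| := by
          rw [abs_mul, abs_of_nonneg hInonneg]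
      _ = |∫ t, p t| := by rw [hkey]
      _ ≤ ∫ t, |p t| := habs
      _ ≤ ∫ t, bound t := hmono
      _ = _ := hbval
  rw [le_div_iff₀ (by positivity)] at hchain
  have hfin : μ ^ 2 * (∫ t, f t) ≤ ∫ t, G t := by nlinarith [hm2, hμpos, hInonneg]
  rw [inv_mul_eq_div, le_div_iff₀ (by positivity : (0:ℝ) < μ ^ 2)]
  linarith
end

section
/- Let λ : ℕ → ℝ be nondecreasing, let N ∈ ℕ satisfy λ_{N+1} > λ_N, and set θ = (λ_N + λ_{N+1})/2. Suppose that for each n ∈ ℕ the functions v_n : ℝ → ℂ are differentiable and h_n : ℝ → ℂ are measurable with v_n′(t) + λ_n v_n(t) = h_n(t) for all t ∈ ℝ, and that ∫_ℝ e^{2θt} Σ_n |v_n(t)|² dt < ∞ and ∫_ℝ e^{2θt} Σ_n |h_n(t)|² dt < ∞. Then ∫_ℝ e^{2θt} Σ_n |v_n(t)|² dt ≤ 4 (λ_{N+1} − λ_N)⁻² ∫_ℝ e^{2θt} Σ_n |h_n(t)|² dt. -/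
open MeasureTheory ENNReal Filter Topology Set

private lemma limit_zero_atTop {F : ℝ → ℝ} {L : ℝ} (hF0 : ∀ t, 0 ≤ F t)
    (hFi : Integrable F) (hL : Tendsto F atTop (𝓝 L)) : L = 0 := by
  by_contra hne
  have hL0 : 0 ≤ L := ge_of_tendsto' hL hF0
  have hLpos : 0 < L := lt_of_le_of_ne hL0 (Ne.symm hne)
  have hev : ∀ᶠ t in atTop, L / 2 < F t := hL.eventually (eventually_gt_nhds (by linarith))
  obtain ⟨T, hT⟩ := eventually_atTop.1 hev
  have hconst : Integrable (fun _ : ℝ => L / 2) (volume.restrict (Ioi T)) := by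
    refine (hFi.integrableOn).mono' aestronglyMeasurable_const ?_
    refine (ae_restrict_iff' measurableSet_Ioi).2 (ae_of_all _ fun t ht => ?_)
    rw [Real.norm_eq_abs, abs_of_pos (by linarith)]
    exact (hT t ht.le).le
  rw [integrable_const_iff] at hconst
  rcases hconst with hc | hc
  · linarith
  · have := hc.measure_univ_lt_top; simp [Real.volume_Ioi] at this

private lemma limit_zero_atBot {F : ℝ → ℝ} {L : ℝ} (hF0 : ∀ t, 0 ≤ F t)
    (hFi : Integrable F) (hL : Tendsto F atBot (𝓝 L)) : L = 0 := by
  by_contra hne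
  have hL0 : 0 ≤ L := ge_of_tendsto' hL hF0
  have hLpos : 0 < L := lt_of_le_of_ne hL0 (Ne.symm hne)
  have hev : ∀ᶠ t in atBot, L / 2 < F t := hL.eventually (eventually_gt_nhds (by linarith))
  obtain ⟨T, hT⟩ := eventually_atBot.1 hev
  have hconst : Integrable (fun _ : ℝ => L / 2) (volume.restrict (Iio T)) := by
    refine (hFi.integrableOn).mono' aestronglyMeasurable_const ?_
    refine (ae_restrict_iff' measurableSet_Iio).2 (ae_of_all _ fun t ht => ?_)
    rw [Real.norm_eq_abs, abs_of_pos (by linarith)]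
    exact (hT t ht.le).le
  rw [integrable_const_iff] at hconst
  rcases hconst with hc | hc
  · linarith
  · have := hc.measure_univ_lt_top; simp [Real.volume_Iio] at this

private lemma integral_deriv_eq_zero {F G : ℝ → ℝ} (hd : ∀ t, HasDerivAt F (G t) t)
    (hF0 : ∀ t, 0 ≤ F t) (hFi : Integrable F) (hGi : Integrable G) :
    ∫ t, G t = 0 := by
  have hsub : ∀ a b : ℝ, ∫ s in a..b, G s = F b - F a := fun a b =>
    intervalIntegral.integral_eq_sub_of_hasDerivAt (fun x _ => hd x) hGi.intervalIntegrable
  have htop : Tendsto F atTop (𝓝 (F 0 + ∫ s in Ioi (0:ℝ), G s)) := by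
    have h1 := intervalIntegral_tendsto_integral_Ioi 0 hGi.integrableOn tendsto_id
    have h2 : Tendsto (fun t => F 0 + ∫ s in (0:ℝ)..t, G s) atTop
        (𝓝 (F 0 + ∫ s in Ioi (0:ℝ), G s)) := tendsto_const_nhds.add h1
    refine h2.congr fun t => ?_
    rw [hsub]; ring
  have hbot : Tendsto F atBot (𝓝 (F 0 - ∫ s in Iic (0:ℝ), G s)) := by
    have h1 := intervalIntegral_tendsto_integral_Iic 0 hGi.integrableOn tendsto_id
    have h2 : Tendsto (fun t => F 0 - ∫ s in t..(0:ℝ), G s) atBot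
        (𝓝 (F 0 - ∫ s in Iic (0:ℝ), G s)) := tendsto_const_nhds.sub h1
    refine h2.congr fun t => ?_
    rw [hsub]; ring
  have h1 := limit_zero_atTop hF0 hFi htop
  have h2 := limit_zero_atBot hF0 hFi hbot
  rw [← intervalIntegral.integral_Iic_add_Ioi hGi.integrableOn hGi.integrableOn]
  linarith

private lemma norm_sq_complex (z : ℂ) : ‖z‖ ^ 2 = z.re ^ 2 + z.im ^ 2 := by
  rw [Complex.sq_norm, Complex.normSq_apply]; ring

private lemma scalar_est (μ θ δ : ℝ) (hδ : 0 < δ) (hgap : δ ≤ |μ - θ|)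
    (v h : ℝ → ℂ) (hv : Differentiable ℝ v) (hh : Measurable h)
    (hode : ∀ t, deriv v t + (μ : ℂ) * v t = h t)
    (hvi : Integrable (fun t => Real.exp (2 * θ * t) * ‖v t‖ ^ 2))
    (hhi : Integrable (fun t => Real.exp (2 * θ * t) * ‖h t‖ ^ 2)) :
    ∫ t, Real.exp (2 * θ * t) * ‖v t‖ ^ 2 ≤
      δ⁻¹ ^ 2 * ∫ t, Real.exp (2 * θ * t) * ‖h t‖ ^ 2 := by
  set F : ℝ → ℝ := fun t => Real.exp (2 * θ * t) * ‖v t‖ ^ 2 with hF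
  set Hf : ℝ → ℝ := fun t => Real.exp (2 * θ * t) * ‖h t‖ ^ 2 with hHf
  set B : ℝ → ℝ := fun t =>
    Real.exp (2 * θ * t) * ((v t).re * (h t).re + (v t).im * (h t).im) with hB
  have hF0 : ∀ t, 0 ≤ F t := fun t => by
    simp only [hF]; positivity
  have hderiv : ∀ t, HasDerivAt F (2 * (θ - μ) * F t + 2 * B t) t := by
    intro t
    have hvt : HasDerivAt v (deriv v t) t := (hv t).hasDerivAt
    have hp : HasDerivAt (fun s => (v s).re) ((deriv v t).re) t :=
      Complex.reCLM.hasFDerivAt.comp_hasDerivAt t hvt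
    have hq : HasDerivAt (fun s => (v s).im) ((deriv v t).im) t :=
      Complex.imCLM.hasFDerivAt.comp_hasDerivAt t hvt
    have hexp : HasDerivAt (fun s : ℝ => Real.exp (2 * θ * s))
        (2 * θ * Real.exp (2 * θ * t)) t := by
      have h1 : HasDerivAt (fun s : ℝ => 2 * θ * s) (2 * θ) t := by
        simpa using (hasDerivAt_id t).const_mul (2 * θ)
      have := h1.exp
      convert this using 1
      ring
    have hsq : HasDerivAt (fun s => (v s).re ^ 2 + (v s).im ^ 2)
        ((deriv v t).re * (v t).re + (v t).re * (deriv v t).re +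
          ((deriv v t).im * (v t).im + (v t).im * (deriv v t).im)) t := by
      have := (hp.fun_mul hp).fun_add (hq.fun_mul hq)
      rw [show (fun s => (v s).re ^ 2 + (v s).im ^ 2) =
          fun s => (v s).re * (v s).re + (v s).im * (v s).im from funext fun s => by ring]
      exact this
    have hFeq : F = fun s => Real.exp (2 * θ * s) * ((v s).re ^ 2 + (v s).im ^ 2) := by
      funext s; simp only [hF, norm_sq_complex]
    have key := hexp.fun_mul hsq
    rw [← hFeq] at key
    have hode' : deriv v t = h t - (μ : ℂ) * v t := eq_sub_of_add_eq (hode t)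
    have hre : (deriv v t).re = (h t).re - μ * (v t).re := by
      rw [hode']; simp [Complex.sub_re, Complex.mul_re]
    have him : (deriv v t).im = (h t).im - μ * (v t).im := by
      rw [hode']; simp [Complex.sub_im, Complex.mul_im]
    refine key.congr_deriv ?_
    simp only [hF, hB, norm_sq_complex, hre, him]
    ring
  have hBbd : ∀ t, |B t| ≤ (δ * F t + δ⁻¹ * Hf t) / 2 := by
    intro t
    have he : (0:ℝ) < Real.exp (2 * θ * t) := Real.exp_pos _
    have hinv : (0:ℝ) < δ⁻¹ := inv_pos.2 hδ
    have hcancel : δ * δ⁻¹ = 1 := mul_inv_cancel₀ hδ.ne'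
    have h2 : |(v t).re * (h t).re + (v t).im * (h t).im| ≤
        (δ * ((v t).re ^ 2 + (v t).im ^ 2) + δ⁻¹ * ((h t).re ^ 2 + (h t).im ^ 2)) / 2 := by
      rw [abs_le]
      constructor <;>
        nlinarith [sq_nonneg (δ * (v t).re + (h t).re), sq_nonneg (δ * (v t).re - (h t).re),
          sq_nonneg (δ * (v t).im + (h t).im), sq_nonneg (δ * (v t).im - (h t).im),
          mul_pos hδ hinv]
    calc |B t| = Real.exp (2 * θ * t) *
          |(v t).re * (h t).re + (v t).im * (h t).im| := by
            rw [hB]; rw [abs_mul, abs_of_pos he]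
      _ ≤ Real.exp (2 * θ * t) *
          ((δ * ((v t).re ^ 2 + (v t).im ^ 2) + δ⁻¹ * ((h t).re ^ 2 + (h t).im ^ 2)) / 2) :=
            mul_le_mul_of_nonneg_left h2 he.le
      _ = (δ * F t + δ⁻¹ * Hf t) / 2 := by
            simp only [hF, hHf, norm_sq_complex]; ring
  have hmexp : Measurable fun t : ℝ => Real.exp (2 * θ * t) :=
    Real.measurable_exp.comp (measurable_const.mul measurable_id)
  have hBmeas : AEStronglyMeasurable B volume := by
    refine Measurable.aestronglyMeasurable ?_
    exact hmexp.mul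
      (((Complex.measurable_re.comp hv.continuous.measurable).mul
          (Complex.measurable_re.comp hh)).add
        ((Complex.measurable_im.comp hv.continuous.measurable).mul
          (Complex.measurable_im.comp hh)))
  have hbdInt : Integrable (fun t => (δ * F t + δ⁻¹ * Hf t) / 2) :=
    ((hvi.const_mul δ).add (hhi.const_mul δ⁻¹)).div_const 2
  have hBi : Integrable B :=
    hbdInt.mono' hBmeas (ae_of_all _ fun t => by rw [Real.norm_eq_abs]; exact hBbd t)
  have hGi : Integrable (fun t => 2 * (θ - μ) * F t + 2 * B t) :=
    (hvi.const_mul _).add (hBi.const_mul 2)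
  have hzero : ∫ t, (2 * (θ - μ) * F t + 2 * B t) = 0 :=
    integral_deriv_eq_zero hderiv hF0 hvi hGi
  have hsplit : 2 * (θ - μ) * (∫ t, F t) + 2 * (∫ t, B t) = 0 := by
    have hadd := integral_add (hvi.const_mul (2 * (θ - μ))) (hBi.const_mul 2)
    rw [integral_const_mul, integral_const_mul] at hadd
    linarith [hzero, hadd]
  have hIV0 : 0 ≤ ∫ t, F t := integral_nonneg hF0
  have hIH0 : 0 ≤ ∫ t, Hf t := integral_nonneg fun t => by simp only [hHf]; positivity
  have hIB : (∫ t, B t) = (μ - θ) * ∫ t, F t := by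
    have h2 : (∫ t, B t) = -(2 * (θ - μ) * ∫ t, F t) / 2 := by linarith
    rw [h2]; ring
  have habs : |μ - θ| * (∫ t, F t) = |∫ t, B t| := by
    rw [hIB, abs_mul, abs_of_nonneg hIV0]
  have hIBbd : |∫ t, B t| ≤ (δ * (∫ t, F t) + δ⁻¹ * (∫ t, Hf t)) / 2 := by
    calc |∫ t, B t| ≤ ∫ t, |B t| := by
          have hn := norm_integral_le_integral_norm (μ := volume) B
          simpa [Real.norm_eq_abs] using hn
      _ ≤ ∫ t, (δ * F t + δ⁻¹ * Hf t) / 2 :=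
          integral_mono hBi.abs hbdInt fun t => hBbd t
      _ = (δ * (∫ t, F t) + δ⁻¹ * (∫ t, Hf t)) / 2 := by
          rw [integral_div, integral_add (hvi.const_mul δ) (hhi.const_mul δ⁻¹),
            integral_const_mul, integral_const_mul]
  have hδIV : δ * (∫ t, F t) ≤ |μ - θ| * (∫ t, F t) :=
    mul_le_mul_of_nonneg_right hgap hIV0
  have h1 : δ * (∫ t, F t) ≤ δ⁻¹ * (∫ t, Hf t) := by linarith
  have h2 := mul_le_mul_of_nonneg_left h1 (inv_pos.2 hδ).le
  rw [← mul_assoc, inv_mul_cancel₀ hδ.ne', one_mul, ← mul_assoc] at h2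
  calc (∫ t, F t) ≤ δ⁻¹ * δ⁻¹ * ∫ t, Hf t := h2
    _ = δ⁻¹ ^ 2 * ∫ t, Hf t := by ring

/-- Solution operator estimate for the linear problem `∂_t v + A v = h` in the weighted
trajectory space `L²_θ(ℝ, H)` with `θ = (λ_N + λ_{N+1})/2`, written in Fourier
coordinates: if `v_n' + λ_n v_n = h_n` for all `n` and both weighted integrals are
finite, then `‖v‖²_{L²_θ} ≤ 4 (λ_{N+1} − λ_N)⁻² ‖h‖²_{L²_θ}`. -/
theorem weighted_solution_operator_estimate (lam : ℕ → ℝ) (hmono : Monotone lam)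
    (N : ℕ) (hgap : lam N < lam (N + 1)) (θ : ℝ) (hθ : θ = (lam N + lam (N + 1)) / 2)
    (v h : ℕ → ℝ → ℂ) (hv : ∀ n, Differentiable ℝ (v n)) (hh : ∀ n, Measurable (h n))
    (hode : ∀ n, ∀ t : ℝ, deriv (v n) t + (lam n : ℂ) * v n t = h n t)
    (hvfin : (∫⁻ t : ℝ, ENNReal.ofReal (Real.exp (2 * θ * t)) *
        ∑' n : ℕ, (‖v n t‖₊ : ℝ≥0∞) ^ 2) < ⊤)
    (hhfin : (∫⁻ t : ℝ, ENNReal.ofReal (Real.exp (2 * θ * t)) *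
        ∑' n : ℕ, (‖h n t‖₊ : ℝ≥0∞) ^ 2) < ⊤) :
    (∫⁻ t : ℝ, ENNReal.ofReal (Real.exp (2 * θ * t)) * ∑' n : ℕ, (‖v n t‖₊ : ℝ≥0∞) ^ 2) ≤
      ENNReal.ofReal (4 / (lam (N + 1) - lam N) ^ 2) *
        ∫⁻ t : ℝ, ENNReal.ofReal (Real.exp (2 * θ * t)) * ∑' n : ℕ, (‖h n t‖₊ : ℝ≥0∞) ^ 2 := by
  set δ : ℝ := (lam (N + 1) - lam N) / 2 with hδdef
  have hδ : 0 < δ := by rw [hδdef]; linarith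
  have hgapn : ∀ n, δ ≤ |lam n - θ| := by
    intro n
    rcases le_or_gt n N with hn | hn
    · have hmn := hmono hn
      have h1 : δ ≤ θ - lam n := by rw [hθ, hδdef]; linarith
      calc δ ≤ θ - lam n := h1
        _ ≤ |θ - lam n| := le_abs_self _
        _ = |lam n - θ| := abs_sub_comm _ _
    · have hmn := hmono (Nat.succ_le_of_lt hn)
      have h1 : δ ≤ lam n - θ := by rw [hθ, hδdef]; linarith
      exact h1.trans (le_abs_self _)
  have hmexp : Measurable fun t : ℝ => Real.exp (2 * θ * t) :=
    Real.measurable_exp.comp (measurable_const.mul measurable_id)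
  have key : ∀ (f : ℝ → ℂ) (t : ℝ),
      ENNReal.ofReal (Real.exp (2 * θ * t)) * (‖f t‖₊ : ℝ≥0∞) ^ 2 =
        ENNReal.ofReal (Real.exp (2 * θ * t) * ‖f t‖ ^ 2) := by
    intro f t
    rw [ENNReal.ofReal_mul (Real.exp_pos _).le, ENNReal.ofReal_pow (norm_nonneg _),
      ← ENNReal.ofReal_coe_nnreal, coe_nnnorm]
  have hswap : ∀ (f : ℕ → ℝ → ℂ), (∀ n, Measurable (f n)) →
      (∫⁻ t : ℝ, ENNReal.ofReal (Real.exp (2 * θ * t)) * ∑' n : ℕ, (‖f n t‖₊ : ℝ≥0∞) ^ 2) =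
        ∑' n : ℕ, ∫⁻ t : ℝ, ENNReal.ofReal (Real.exp (2 * θ * t) * ‖f n t‖ ^ 2) := by
    intro f hf
    calc (∫⁻ t : ℝ, ENNReal.ofReal (Real.exp (2 * θ * t)) * ∑' n : ℕ, (‖f n t‖₊ : ℝ≥0∞) ^ 2) =
        ∫⁻ t : ℝ, ∑' n : ℕ, ENNReal.ofReal (Real.exp (2 * θ * t) * ‖f n t‖ ^ 2) := by
          refine lintegral_congr fun t => ?_
          rw [← ENNReal.tsum_mul_left]
          exact tsum_congr fun n => key (f n) t
      _ = ∑' n : ℕ, ∫⁻ t : ℝ, ENNReal.ofReal (Real.exp (2 * θ * t) * ‖f n t‖ ^ 2) := by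
          refine lintegral_tsum fun n => Measurable.aemeasurable ?_
          exact ENNReal.measurable_ofReal.comp
            (hmexp.mul (((hf n).norm).pow_const 2))
  have hvmeas : ∀ n, Measurable (v n) := fun n => (hv n).continuous.measurable
  rw [hswap v hvmeas] at hvfin ⊢
  rw [hswap h hh] at hhfin ⊢
  have hint : ∀ (f : ℝ → ℂ), Measurable f →
      (∫⁻ t : ℝ, ENNReal.ofReal (Real.exp (2 * θ * t) * ‖f t‖ ^ 2)) < ⊤ →
      Integrable (fun t => Real.exp (2 * θ * t) * ‖f t‖ ^ 2) := by
    intro f hf hfin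
    refine ⟨Measurable.aestronglyMeasurable (hmexp.mul (hf.norm.pow_const 2)), ?_⟩
    rw [hasFiniteIntegral_iff_ofReal (ae_of_all _ fun t => by positivity)]
    exact hfin
  have hvint : ∀ n, Integrable (fun t => Real.exp (2 * θ * t) * ‖v n t‖ ^ 2) := fun n =>
    hint (v n) (hvmeas n) (lt_of_le_of_lt (ENNReal.le_tsum n) hvfin)
  have hhint : ∀ n, Integrable (fun t => Real.exp (2 * θ * t) * ‖h n t‖ ^ 2) := fun n =>
    hint (h n) (hh n) (lt_of_le_of_lt (ENNReal.le_tsum n) hhfin)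
  have hC : δ⁻¹ ^ 2 = 4 / (lam (N + 1) - lam N) ^ 2 := by
    have hne : lam (N + 1) - lam N ≠ 0 := by intro hc; rw [sub_eq_zero] at hc; linarith
    rw [hδdef]; field_simp; ring
  have hper : ∀ n, (∫⁻ t : ℝ, ENNReal.ofReal (Real.exp (2 * θ * t) * ‖v n t‖ ^ 2)) ≤
      ENNReal.ofReal (4 / (lam (N + 1) - lam N) ^ 2) *
        ∫⁻ t : ℝ, ENNReal.ofReal (Real.exp (2 * θ * t) * ‖h n t‖ ^ 2) := by
    intro n
    have hest := scalar_est (lam n) θ δ hδ (hgapn n) (v n) (h n) (hv n) (hh n) (hode n)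
      (hvint n) (hhint n)
    have hveq := ofReal_integral_eq_lintegral_ofReal (hvint n)
      (ae_of_all _ fun t => by positivity)
    have hheq := ofReal_integral_eq_lintegral_ofReal (hhint n)
      (ae_of_all _ fun t => by positivity)
    rw [← hveq, ← hheq, ← ENNReal.ofReal_mul (by positivity), ← hC]
    exact ENNReal.ofReal_le_ofReal hest
  calc (∑' n : ℕ, ∫⁻ t : ℝ, ENNReal.ofReal (Real.exp (2 * θ * t) * ‖v n t‖ ^ 2)) ≤
      ∑' n : ℕ, ENNReal.ofReal (4 / (lam (N + 1) - lam N) ^ 2) *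
        ∫⁻ t : ℝ, ENNReal.ofReal (Real.exp (2 * θ * t) * ‖h n t‖ ^ 2) :=
        ENNReal.tsum_le_tsum hper
    _ = ENNReal.ofReal (4 / (lam (N + 1) - lam N) ^ 2) *
        ∑' n : ℕ, ∫⁻ t : ℝ, ENNReal.ofReal (Real.exp (2 * θ * t) * ‖h n t‖ ^ 2) :=
        ENNReal.tsum_mul_left
end

section
/- Let θ : ℂ → ℂ satisfy |θ(ξ)| ≤ 2 for all ξ ∈ ℂ and let C* > 0. Then for every ε > 0 there exists a constant C_ε > 0, depending only on ε and C*, such that for every family w : ℤ³\{0} → ℂ³ one has Σ_{j∈ℤ³, j≠0} |j|^{3−2ε} |W(w)_j|² ≤ C_ε; i.e., W is globally bounded as a map from H into H^{3/2−ε}. -/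
noncomputable section

/-- Euclidean norm `|j|` on `ℤ³`. -/
def znorm (j : Fin 3 → ℤ) : ℝ := Real.sqrt (znormSq j)

/-- Squared Euclidean norm `|x|² = Σ_k |x^k|²` of a vector `x ∈ ℂ³`. -/
def vnormSq (x : Fin 3 → ℂ) : ℝ := ∑ i, ‖x i‖ ^ 2

/-- The Leray projector matrix `P_j = Id − |j|⁻² j jᵀ` acting on `ℂ³`. -/
def leray (j : Fin 3 → ℤ) (x : Fin 3 → ℂ) : Fin 3 → ℂ :=
  fun i => x i - ((∑ k, (j k : ℂ) * x k) / ((znormSq j : ℝ) : ℂ)) * (j i : ℂ)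

/-- The truncation map `W`, defined coefficientwise by
`W(w)_j = (C*/|j|³) P_j θ⃗(|j|³ w_j / C*)`. -/
def Wmap (θ : ℂ → ℂ) (Cs : ℝ) (w : (Fin 3 → ℤ) → (Fin 3 → ℂ)) (j : Fin 3 → ℤ) :
    Fin 3 → ℂ :=
  fun i => ((Cs / (znorm j) ^ 3 : ℝ) : ℂ) *
    leray j (fun k => θ ((((znorm j) ^ 3 / Cs : ℝ) : ℂ) * w j k)) i

/-- The derivative of the truncation map,
`(W′(w)z)_j = P_j Dθ⃗(|j|³ w_j / C*)[z_j]`. -/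
def Wderiv (θ : ℂ → ℂ) (Cs : ℝ) (w z : (Fin 3 → ℤ) → (Fin 3 → ℂ)) (j : Fin 3 → ℤ) :
    Fin 3 → ℂ :=
  leray j (fun k => fderiv ℝ θ ((((znorm j) ^ 3 / Cs : ℝ) : ℂ) * w j k) (z j k))

lemma znormSq_nonneg (j : Fin 3 → ℤ) : 0 ≤ znormSq j :=
  Finset.sum_nonneg fun i _ => sq_nonneg _
lemma znorm_nonneg (j : Fin 3 → ℤ) : 0 ≤ znorm j := Real.sqrt_nonneg _
lemma znormSq_eq_sq (j : Fin 3 → ℤ) : znormSq j = znorm j ^ 2 :=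
  (Real.sq_sqrt (znormSq_nonneg j)).symm
lemma one_le_znorm {j : Fin 3 → ℤ} (hj : j ≠ 0) : 1 ≤ znorm j := by
  obtain ⟨i, hi⟩ : ∃ i, j i ≠ 0 := by
    by_contra h; push_neg at h; exact hj (funext h)
  have h1 : (1:ℝ) ≤ ((j i : ℝ))^2 := by
    have : (1:ℤ) ≤ (j i)^2 := by rcases lt_or_gt_of_ne hi with h | h <;> nlinarith
    exact_mod_cast this
  have h2 : (1:ℝ) ≤ znormSq j :=
    h1.trans (Finset.single_le_sum (fun k _ => sq_nonneg ((j k : ℝ))) (Finset.mem_univ i))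
  calc (1:ℝ) = Real.sqrt 1 := Real.sqrt_one.symm
    _ ≤ znorm j := Real.sqrt_le_sqrt h2
lemma znorm_pos {j : Fin 3 → ℤ} (hj : j ≠ 0) : 0 < znorm j :=
  lt_of_lt_of_le one_pos (one_le_znorm hj)
lemma abs_coord_le (j : Fin 3 → ℤ) (i : Fin 3) : |(j i : ℝ)| ≤ znorm j := by
  have h1 : ((j i : ℝ))^2 ≤ znormSq j :=
    Finset.single_le_sum (fun k _ => sq_nonneg ((j k : ℝ))) (Finset.mem_univ i)
  calc |(j i : ℝ)| = Real.sqrt (((j i : ℝ))^2) := (Real.sqrt_sq_eq_abs _).symm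
    _ ≤ znorm j := Real.sqrt_le_sqrt h1

lemma abs_leray_le {j : Fin 3 → ℤ} (hj : j ≠ 0) {y : Fin 3 → ℂ}
    (hy : ∀ k, ‖y k‖ ≤ 2) (i : Fin 3) :
    ‖leray j y i‖ ≤ 8 := by
  have hz := znorm_pos hj
  have hsum : ‖∑ k, (j k : ℂ) * y k‖ ≤ 6 * znorm j := by
    calc ‖∑ k, (j k : ℂ) * y k‖
        ≤ ∑ k, ‖(j k : ℂ) * y k‖ := norm_sum_le _ _
      _ ≤ ∑ k : Fin 3, znorm j * 2 := by
          refine Finset.sum_le_sum fun k _ => ?_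
          rw [norm_mul, Complex.norm_intCast]
          exact mul_le_mul (abs_coord_le j k) (hy k) (norm_nonneg _)
            (znorm_nonneg j)
      _ = 6 * znorm j := by simp; ring
  have habs2 : ‖((∑ k, (j k : ℂ) * y k) / ((znormSq j : ℝ) : ℂ)) * (j i : ℂ)‖ ≤ 6 := by
    rw [norm_mul, norm_div, Complex.norm_real, Real.norm_eq_abs, Complex.norm_intCast,
      abs_of_nonneg (znormSq_nonneg j), znormSq_eq_sq]
    have h1 := abs_coord_le j i
    have h2 : (0:ℝ) < znorm j ^ 2 := by positivity
    rw [div_mul_eq_mul_div, div_le_iff₀ h2]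
    nlinarith [norm_nonneg (∑ k, (j k : ℂ) * y k), abs_nonneg ((j i : ℝ))]
  calc ‖leray j y i‖
      ≤ ‖y i‖
        + ‖((∑ k, (j k : ℂ) * y k) / ((znormSq j : ℝ) : ℂ)) * (j i : ℂ)‖ := by
        unfold leray
        exact norm_sub_le _ _
    _ ≤ 2 + 6 := add_le_add (hy i) habs2
    _ = 8 := by norm_num

lemma vnormSq_Wmap_le {θ : ℂ → ℂ} {Cs : ℝ} (hCs : 0 < Cs)
    (hθ : ∀ ξ : ℂ, ‖θ ξ‖ ≤ 2) (w : (Fin 3 → ℤ) → (Fin 3 → ℂ))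
    {j : Fin 3 → ℤ} (hj : j ≠ 0) :
    vnormSq (Wmap θ Cs w j) ≤ 192 * Cs^2 / znorm j ^ 6 := by
  have hz := znorm_pos hj
  have hcomp : ∀ i, ‖Wmap θ Cs w j i‖ ≤ 8 * Cs / znorm j ^ 3 := by
    intro i
    unfold Wmap
    rw [norm_mul, Complex.norm_real, Real.norm_eq_abs, abs_of_nonneg (by positivity)]
    calc Cs / znorm j ^ 3 * ‖leray j _ i‖
        ≤ Cs / znorm j ^ 3 * 8 :=
          mul_le_mul_of_nonneg_left (abs_leray_le hj (fun k => hθ _) i) (by positivity)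
      _ = 8 * Cs / znorm j ^ 3 := by ring
  unfold vnormSq
  calc ∑ i, ‖Wmap θ Cs w j i‖ ^ 2
      ≤ ∑ i : Fin 3, (8 * Cs / znorm j ^ 3) ^ 2 := by
        refine Finset.sum_le_sum fun i _ => ?_
        exact pow_le_pow_left₀ (norm_nonneg _) (hcomp i) 2
    _ = 192 * Cs ^ 2 / znorm j ^ 6 := by
        simp [Finset.sum_const]
        field_simp
        ring


lemma key_bound {Cs ε : ℝ} (hCs : 0 < Cs) (hε : 0 < ε) {θ : ℂ → ℂ}
    (hθ : ∀ ξ : ℂ, ‖θ ξ‖ ≤ 2) (w : (Fin 3 → ℤ) → (Fin 3 → ℂ))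
    {j : Fin 3 → ℤ} (hj : j ≠ 0) :
    znorm j ^ (3 - 2*ε) * vnormSq (Wmap θ Cs w j) ≤
      (192 * Cs^2 * 2 ^ (3 + 2*ε)) * ∏ i, (1 + |((j i : ℤ) : ℝ)|) ^ (-(1 + 2*ε/3)) := by
  set a := znorm j with ha
  have hapos : 0 < a := znorm_pos hj
  have ha1 : 1 ≤ a := one_le_znorm hj
  set s : ℝ := 3 + 2*ε with hs
  set q : ℝ := 1 + 2*ε/3 with hqdef
  have h2a : 0 < 2*a := by linarith
  have step1 : znorm j ^ (3 - 2*ε) * vnormSq (Wmap θ Cs w j) ≤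
      192 * Cs^2 * a ^ (-s) := by
    have h1 : znorm j ^ (3 - 2*ε) * vnormSq (Wmap θ Cs w j) ≤
        a ^ (3 - 2*ε) * (192 * Cs^2 / a ^ 6) :=
      mul_le_mul_of_nonneg_left (vnormSq_Wmap_le hCs hθ w hj)
        (Real.rpow_nonneg hapos.le _)
    refine h1.trans_eq ?_
    rw [← Real.rpow_natCast a 6, div_eq_mul_inv, ← Real.rpow_neg hapos.le,
      mul_comm, mul_assoc, ← Real.rpow_add hapos]
    rw [hs]
    congr 1
    push_cast
    ring
  have step2 : (2*a) ^ (-s) ≤ ∏ i, (1 + |((j i : ℤ) : ℝ)|) ^ (-q) := by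
    have heq : (2*a) ^ (-s) = ∏ _i : Fin 3, (2*a) ^ (-q) := by
      rw [Finset.prod_const, Finset.card_univ, Fintype.card_fin,
        ← Real.rpow_natCast ((2*a) ^ (-q)) 3, ← Real.rpow_mul h2a.le]
      rw [hs, hqdef]
      congr 1
      push_cast
      ring
    rw [heq]
    refine Finset.prod_le_prod (fun i _ => Real.rpow_nonneg h2a.le _) fun i _ => ?_
    refine Real.rpow_le_rpow_of_nonpos (by positivity) ?_ (by simp [hqdef]; linarith)
    have := abs_coord_le j i
    linarith
  have step3 : a ^ (-s) ≤ 2 ^ s * ∏ i, (1 + |((j i : ℤ) : ℝ)|) ^ (-q) := by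
    have hmul : (2*a) ^ (-s) = 2 ^ (-s) * a ^ (-s) := Real.mul_rpow (by norm_num) hapos.le
    have h2 : 2 ^ s * (2:ℝ) ^ (-s) = 1 := by
      rw [← Real.rpow_add (by norm_num : (0:ℝ) < 2)]; simp
    calc a ^ (-s) = 2 ^ s * ((2*a) ^ (-s)) := by rw [hmul, ← mul_assoc, h2, one_mul]
      _ ≤ 2 ^ s * ∏ i, (1 + |((j i : ℤ) : ℝ)|) ^ (-q) :=
          mul_le_mul_of_nonneg_left step2 (Real.rpow_nonneg (by norm_num) _)
  calc znorm j ^ (3 - 2*ε) * vnormSq (Wmap θ Cs w j)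
      ≤ 192 * Cs^2 * a ^ (-s) := step1
    _ ≤ 192 * Cs^2 * (2 ^ s * ∏ i, (1 + |((j i : ℤ) : ℝ)|) ^ (-q)) :=
        mul_le_mul_of_nonneg_left step3 (by positivity)
    _ = (192 * Cs^2 * 2 ^ s) * ∏ i, (1 + |((j i : ℤ) : ℝ)|) ^ (-q) := by ring



lemma summable_prod_aux {p : ℝ} (hp : 1 < p) :
    Summable fun j : Fin 3 → ℤ => ∏ i, (1 + |((j i : ℤ) : ℝ)|) ^ (-p) := by
  have hg : Summable fun n : ℤ => (1 + |(n:ℝ)|) ^ (-p) := by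
    have base : Summable fun n : ℕ => ((1 : ℝ) + (n : ℝ)) ^ (-p) := by
      have h := (summable_nat_add_iff (f := fun n : ℕ => (n:ℝ) ^ (-p)) 1).mpr
        (Real.summable_nat_rpow.mpr (by linarith : -p < -1))
      exact h.congr fun n => by push_cast; ring_nf
    rw [summable_int_iff_summable_nat_and_neg]
    refine ⟨base.congr fun n => by rw [Int.cast_natCast, Nat.abs_cast], ?_⟩
    exact base.congr fun n => by rw [Int.cast_neg, abs_neg, Int.cast_natCast, Nat.abs_cast]
  set g : ℤ → ℝ := fun n => (1 + |(n:ℝ)|) ^ (-p) with hgdef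
  have hg0 : ∀ n, 0 ≤ g n := fun n => Real.rpow_nonneg (by positivity) _
  have h2 : Summable fun x : ℤ × ℤ => g x.1 * g x.2 := hg.mul_of_nonneg hg hg0 hg0
  have h3 : Summable fun x : ℤ × ℤ × ℤ => g x.1 * (g x.2.1 * g x.2.2) :=
    hg.mul_of_nonneg h2 hg0 (fun x => mul_nonneg (hg0 _) (hg0 _))
  have h4 : Summable (fun j : Fin 3 → ℤ => g (j 0) * (g (j 1) * g (j 2))) := by
    have := (Equiv.summable_iff
      ((Fin.consEquiv fun _ => ℤ).symm.trans
        (Equiv.prodCongr (Equiv.refl ℤ) (finTwoArrowEquiv ℤ)))).mpr h3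
    exact this.congr fun j => by
      simp [Fin.consEquiv, finTwoArrowEquiv, Function.comp, Fin.tail]
  exact h4.congr fun j => by rw [Fin.prod_univ_three]; ring


/-- Global boundedness of the truncation map `W` from `H` into `H^{3/2−ε}`: if
`|θ(ξ)| ≤ 2` everywhere, then for every `ε > 0` there is a constant `C_ε > 0`, depending
only on `ε` and `C*`, such that `Σ_{j≠0} |j|^{3−2ε} |W(w)_j|² ≤ C_ε` for every family
`w`. -/
theorem Wmap_globally_bounded (Cs : ℝ) (hCs : 0 < Cs) (ε : ℝ) (hε : 0 < ε) :
    ∃ Cε : ℝ, 0 < Cε ∧ ∀ θ : ℂ → ℂ, (∀ ξ : ℂ, ‖θ ξ‖ ≤ 2) →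
      ∀ w : (Fin 3 → ℤ) → (Fin 3 → ℂ),
        Summable (fun j : {j : Fin 3 → ℤ // j ≠ 0} =>
          (znorm j.1) ^ (3 - 2 * ε) * vnormSq (Wmap θ Cs w j.1)) ∧
        (∑' j : {j : Fin 3 → ℤ // j ≠ 0},
          (znorm j.1) ^ (3 - 2 * ε) * vnormSq (Wmap θ Cs w j.1)) ≤ Cε := by
  have hq : (1:ℝ) < 1 + 2*ε/3 := by linarith
  set h : {j : Fin 3 → ℤ // j ≠ 0} → ℝ :=
    fun j => ∏ i, (1 + |((j.1 i : ℤ) : ℝ)|) ^ (-(1 + 2*ε/3)) with hhdef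
  have hsub : Summable h := (summable_prod_aux hq).subtype _
  have hh0 : ∀ j, 0 ≤ h j := fun j =>
    Finset.prod_nonneg fun i _ => Real.rpow_nonneg (by positivity) _
  set K : ℝ := 192 * Cs^2 * 2 ^ (3 + 2*ε) with hKdef
  have hK : 0 < K := by
    have : (0:ℝ) < 2 ^ (3 + 2*ε) := Real.rpow_pos_of_pos (by norm_num) _
    positivity
  have htsum0 : 0 ≤ ∑' j, h j := tsum_nonneg hh0
  refine ⟨K * (∑' j, h j) + 1, by positivity, fun θ hθ w => ?_⟩
  have hbound : ∀ j : {j : Fin 3 → ℤ // j ≠ 0},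
      znorm j.1 ^ (3 - 2 * ε) * vnormSq (Wmap θ Cs w j.1) ≤ K * h j :=
    fun j => key_bound hCs hε hθ w j.2
  have hnn : ∀ j : {j : Fin 3 → ℤ // j ≠ 0},
      0 ≤ znorm j.1 ^ (3 - 2 * ε) * vnormSq (Wmap θ Cs w j.1) := fun j =>
    mul_nonneg (Real.rpow_nonneg (znorm_nonneg _) _)
      (Finset.sum_nonneg fun i _ => sq_nonneg _)
  have hKh : Summable fun j => K * h j := hsub.mul_left K
  have hsummable : Summable (fun j : {j : Fin 3 → ℤ // j ≠ 0} =>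
      znorm j.1 ^ (3 - 2 * ε) * vnormSq (Wmap θ Cs w j.1)) :=
    Summable.of_nonneg_of_le hnn hbound hKh
  refine ⟨hsummable, ?_⟩
  calc (∑' j : {j : Fin 3 → ℤ // j ≠ 0},
        znorm j.1 ^ (3 - 2 * ε) * vnormSq (Wmap θ Cs w j.1))
      ≤ ∑' j, K * h j := Summable.tsum_le_tsum hbound hsummable hKh
    _ = K * ∑' j, h j := tsum_mul_left
    _ ≤ K * (∑' j, h j) + 1 := by linarith


end
end

section
/- Let θ : ℂ → ℂ be twice continuously differentiable in the real sense with ‖D²θ(ξ)‖ ≤ M for all ξ ∈ ℂ, and let C* > 0. Then for all families w, z : ℤ³\{0} → ℂ³ one has Σ_{j≠0} |W(w+z)_j − W(w)_j − (W′(w)z)_j|² ≤ (M/(2C*))² (Σ_{j≠0} |z_j|²) (Σ_{j≠0} |j|⁶ |z_j|²); i.e., ‖W(w₁) − W(w₂) − W′(w₁)(w₁−w₂)‖_H ≤ (M/(2C*)) ‖w₁−w₂‖_H ‖w₁−w₂‖_{H³} with z = w₁ − w₂ (up to the choice of base point). -/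
noncomputable section

open Complex Set

lemma vnormSq_nonneg (x : Fin 3 → ℂ) : 0 ≤ vnormSq x :=
  Finset.sum_nonneg fun i _ => sq_nonneg _


lemma taylor2 (θ : ℂ → ℂ) (M : ℝ) (hsmooth : ContDiff ℝ 2 θ)
    (hbd : ∀ ξ : ℂ, ‖fderiv ℝ (fderiv ℝ θ) ξ‖ ≤ M) (a b : ℂ) :
    ‖θ (a + b) - θ a - fderiv ℝ θ a b‖ ≤ M / 2 * ‖b‖ ^ 2 := by
  have hd : Differentiable ℝ θ := hsmooth.differentiable (by norm_num)
  have hlip : ∀ u v : ℂ, ‖fderiv ℝ θ u - fderiv ℝ θ v‖ ≤ M * ‖u - v‖ := by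
    intro u v
    have h1 : ContDiff ℝ 1 (fderiv ℝ θ) := hsmooth.fderiv_right (by norm_num)
    exact Convex.norm_image_sub_le_of_norm_fderiv_le
      (fun x _ => (h1.differentiable (by norm_num) x)) (fun x _ => hbd x) convex_univ trivial trivial
  set f : ℝ → ℂ := fun t => θ (a + t • b) - θ a - t • (fderiv ℝ θ a b) with hf
  set f' : ℝ → ℂ := fun t => fderiv ℝ θ (a + t • b) b - fderiv ℝ θ a b with hf'def
  have hDf : ∀ t : ℝ, HasDerivAt f (f' t) t := by
    intro t
    have h1 : HasDerivAt (fun t : ℝ => a + t • b) b t := by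
      simpa using ((hasDerivAt_id t).smul_const b).const_add a
    have h2 : HasDerivAt (fun t : ℝ => θ (a + t • b)) (fderiv ℝ θ (a + t • b) b) t :=
      (hd (a + t • b)).hasFDerivAt.comp_hasDerivAt t h1
    have h3 : HasDerivAt (fun t : ℝ => t • (fderiv ℝ θ a b)) (fderiv ℝ θ a b) t := by
      simpa using (hasDerivAt_id t).smul_const (fderiv ℝ θ a b)
    exact (h2.sub_const (θ a)).sub h3
  have hB : ∀ t : ℝ, HasDerivAt (fun t => M * ‖b‖ ^ 2 * t ^ 2 / 2) (M * ‖b‖ ^ 2 * t) t := by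
    intro t
    have := ((hasDerivAt_pow 2 t).const_mul (M * ‖b‖ ^ 2)).div_const 2
    refine this.congr_deriv ?_
    ring
  have key := image_norm_le_of_norm_deriv_right_le_deriv_boundary
    (f := f) (f' := f') (a := 0) (b := 1)
    (fun t _ => (hDf t).continuousAt.continuousWithinAt)
    (fun t _ => (hDf t).hasDerivWithinAt)
    (by simp [f]) hB
    (fun t ht => by
      have hop : ‖f' t‖ ≤ ‖fderiv ℝ θ (a + t • b) - fderiv ℝ θ a‖ * ‖b‖ := by
        simpa [f', ContinuousLinearMap.sub_apply] using
          (fderiv ℝ θ (a + t • b) - fderiv ℝ θ a).le_opNorm b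
      have h2 : ‖fderiv ℝ θ (a + t • b) - fderiv ℝ θ a‖ ≤ M * (t * ‖b‖) := by
        have := hlip (a + t • b) a
        simpa [norm_smul, _root_.abs_of_nonneg ht.1] using this
      have hM : 0 ≤ M := le_trans (by positivity) (hbd 0)
      calc ‖f' t‖ ≤ M * (t * ‖b‖) * ‖b‖ := hop.trans (by
            exact mul_le_mul_of_nonneg_right h2 (norm_nonneg b))
        _ = M * ‖b‖ ^ 2 * t := by ring)
  have h1 := key (right_mem_Icc.mpr zero_le_one)
  have : f 1 = θ (a + b) - θ a - fderiv ℝ θ a b := by simp [f]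
  rw [this] at h1
  calc ‖θ (a + b) - θ a - fderiv ℝ θ a b‖ ≤ M * ‖b‖ ^ 2 * 1 ^ 2 / 2 := h1
    _ = M / 2 * ‖b‖ ^ 2 := by ring

lemma znormSq_pos {j : Fin 3 → ℤ} (hj : j ≠ 0) : 0 < znormSq j := by
  obtain ⟨i, hi⟩ : ∃ i, j i ≠ 0 := by
    by_contra h; push_neg at h; exact hj (funext h)
  have h1 : (0:ℝ) < ((j i : ℝ))^2 := by positivity
  have h2 := Finset.single_le_sum (f := fun i => ((j i : ℝ))^2)
    (fun i _ => sq_nonneg _) (Finset.mem_univ i)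
  exact lt_of_lt_of_le h1 h2

lemma vnormSq_leray_le {j : Fin 3 → ℤ} (hj : j ≠ 0) (x : Fin 3 → ℂ) :
    vnormSq (leray j x) ≤ vnormSq x := by
  have hQ : 0 < znormSq j := znormSq_pos hj
  set Q : ℝ := znormSq j with hQdef
  set s : ℂ := ∑ k, (j k : ℂ) * x k with hs
  set c : ℂ := s / (Q : ℂ) with hc
  have expand : vnormSq (leray j x) =
      vnormSq x - 2 * (starRingEnd ℂ c * s).re + Complex.normSq c * Q := by
    unfold vnormSq leray
    simp only [Complex.sq_norm]
    have hterm : ∀ i, Complex.normSq (x i - c * (j i : ℂ)) =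
        Complex.normSq (x i) - 2 * (starRingEnd ℂ c * ((j i : ℂ) * x i)).re
          + Complex.normSq c * ((j i : ℝ))^2 := by
      intro i
      have : Complex.normSq (x i - c * (j i : ℂ)) =
          Complex.normSq (x i) + Complex.normSq (c * (j i : ℂ))
            - 2 * ((x i) * starRingEnd ℂ (c * (j i : ℂ))).re := Complex.normSq_sub _ _
      rw [this, Complex.normSq_mul, map_mul]
      have h1 : starRingEnd ℂ ((j i : ℂ)) = (j i : ℂ) := by
        simp
      have h2 : Complex.normSq ((j i : ℂ)) = ((j i : ℝ))^2 := by
        rw [Complex.normSq_intCast]; push_cast; ring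
      rw [h1, h2]
      have h3 : (x i * (c * (j i:ℂ))⁻¹ ).re = 0 ∨ True := Or.inr trivial
      have h4 : (x i * ((starRingEnd ℂ) c * (j i:ℂ))).re
          = ((starRingEnd ℂ) c * ((j i:ℂ) * x i)).re := by ring_nf
      rw [h4]; ring
    rw [Finset.sum_congr rfl (fun i _ => hterm i)]
    rw [Finset.sum_add_distrib, Finset.sum_sub_distrib, ← Finset.mul_sum, ← Finset.mul_sum]
    congr 2
    · rw [← Complex.re_sum, ← Finset.mul_sum]
  have hcs : (starRingEnd ℂ c * s).re = Complex.normSq s / Q := by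
    rw [hc]
    rw [map_div₀, Complex.conj_ofReal, div_mul_eq_mul_div,
      ← Complex.normSq_eq_conj_mul_self, ← Complex.ofReal_div, Complex.ofReal_re]
  have hnc : Complex.normSq c = Complex.normSq s / Q ^ 2 := by
    rw [hc, Complex.normSq_div, Complex.normSq_ofReal]; ring_nf
  rw [expand, hcs, hnc]
  have h0 : 0 ≤ Complex.normSq s / Q := div_nonneg (Complex.normSq_nonneg _) hQ.le
  have : Complex.normSq s / Q ^ 2 * Q = Complex.normSq s / Q := by
    field_simp
  rw [this]
  linarith

lemma leray_sub (j : Fin 3 → ℤ) (x y : Fin 3 → ℂ) (i : Fin 3) :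
    leray j (fun k => x k - y k) i = leray j x i - leray j y i := by
  unfold leray
  rw [show (∑ k, (j k : ℂ) * (x k - y k)) = (∑ k, (j k:ℂ) * x k) - ∑ k, (j k:ℂ) * y k by
    rw [← Finset.sum_sub_distrib]; congr 1; ext k; ring]
  ring

lemma leray_smul (j : Fin 3 → ℤ) (c : ℂ) (x : Fin 3 → ℂ) (i : Fin 3) :
    leray j (fun k => c * x k) i = c * leray j x i := by
  unfold leray
  rw [show (∑ k, (j k : ℂ) * (c * x k)) = c * ∑ k, (j k:ℂ) * x k by
    rw [Finset.mul_sum]; congr 1; ext k; ring]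
  ring

lemma pointwise_bound (θ : ℂ → ℂ) (M : ℝ) (hsmooth : ContDiff ℝ 2 θ)
    (hbd : ∀ ξ : ℂ, ‖fderiv ℝ (fderiv ℝ θ) ξ‖ ≤ M) (Cs : ℝ) (hCs : 0 < Cs)
    (w z : (Fin 3 → ℤ) → (Fin 3 → ℂ)) (j : Fin 3 → ℤ) (hj : j ≠ 0) :
    vnormSq (fun i => Wmap θ Cs (w + z) j i - Wmap θ Cs w j i - Wderiv θ Cs w z j i)
      ≤ (M / (2 * Cs)) ^ 2 * (vnormSq (z j) * ((znorm j) ^ 6 * vnormSq (z j))) := by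
  have hM : 0 ≤ M := le_trans (by positivity) (hbd 0)
  have hn : 0 < znorm j := Real.sqrt_pos.mpr (znormSq_pos hj)
  have hn3 : (0:ℝ) < znorm j ^ 3 := by positivity
  set r : ℝ := znorm j ^ 3 / Cs with hrdef
  have hr : 0 < r := by positivity
  set c : ℝ := Cs / znorm j ^ 3 with hcdef
  have hc : 0 < c := by positivity
  have hcr : c * r = 1 := by rw [hcdef, hrdef]; field_simp
  set ξ : Fin 3 → ℂ := fun k => ((r : ℝ) : ℂ) * w j k with hξ
  set h : Fin 3 → ℂ := fun k => ((r : ℝ) : ℂ) * z j k with hh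
  set R : Fin 3 → ℂ := fun k => θ (ξ k + h k) - θ (ξ k) - fderiv ℝ θ (ξ k) (h k) with hR
  have ident : ∀ i, Wmap θ Cs (w + z) j i - Wmap θ Cs w j i - Wderiv θ Cs w z j i
      = (c : ℂ) * leray j R i := by
    intro i
    have e1 : (fun k => θ ((((znorm j) ^ 3 / Cs : ℝ) : ℂ) * (w + z) j k))
        = fun k => θ (ξ k + h k) := by
      funext k
      rw [hξ, hh]
      simp only [Pi.add_apply, hrdef]
      ring_nf
    have e2 : (fun k => fderiv ℝ θ ((((znorm j) ^ 3 / Cs : ℝ) : ℂ) * w j k) (z j k))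
        = fun k => (c : ℂ) * fderiv ℝ θ (ξ k) (h k) := by
      funext k
      have hz : z j k = (c : ℝ) • h k := by
        rw [hh]
        simp only [smul_eq_mul, Complex.real_smul]
        rw [← mul_assoc, ← Complex.ofReal_mul, hcr]
        simp
      rw [hξ, hrdef, hz, map_smul]
      simp [Complex.real_smul]
    unfold Wmap Wderiv
    rw [e1, e2, leray_smul]
    have e3 : ((Cs / (znorm j) ^ 3 : ℝ) : ℂ) = (c : ℂ) := by rw [hcdef]
    rw [e3, hR]
    have e4 : leray j (fun k => θ (ξ k + h k) - θ (ξ k) - fderiv ℝ θ (ξ k) (h k)) i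
        = leray j (fun k => θ (ξ k + h k)) i - leray j (fun k => θ (ξ k)) i
          - leray j (fun k => fderiv ℝ θ (ξ k) (h k)) i := by
      rw [show (fun k => θ (ξ k + h k) - θ (ξ k) - fderiv ℝ θ (ξ k) (h k))
          = fun k => (fun k => θ (ξ k + h k) - θ (ξ k)) k
              - (fun k => fderiv ℝ θ (ξ k) (h k)) k from rfl,
        leray_sub, leray_sub]
    rw [e4]
    have e5 : leray j (fun k => θ ((((znorm j) ^ 3 / Cs : ℝ) : ℂ) * w j k)) i
        = leray j (fun k => θ (ξ k)) i := by
      congr 1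
    rw [e5]
    ring
  have step1 : vnormSq (fun i => Wmap θ Cs (w + z) j i - Wmap θ Cs w j i - Wderiv θ Cs w z j i)
      = c ^ 2 * vnormSq (leray j R) := by
    unfold vnormSq
    rw [Finset.mul_sum]
    congr 1; funext i
    show ‖Wmap θ Cs (w + z) j i - Wmap θ Cs w j i - Wderiv θ Cs w z j i‖ ^ 2
      = c ^ 2 * ‖leray j R i‖ ^ 2
    rw [ident i, norm_mul, Complex.norm_real, Real.norm_of_nonneg hc.le]
    ring
  have step2 : vnormSq R ≤ (M / 2) ^ 2 * (vnormSq h) ^ 2 := by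
    have e6 : ∀ k, ‖R k‖ ^ 2 ≤ (M / 2) ^ 2 * (‖h k‖ ^ 2) ^ 2 := by
      intro k
      have := taylor2 θ M hsmooth hbd (ξ k) (h k)
      have h1 : ‖R k‖ ≤ M / 2 * ‖h k‖ ^ 2 := this
      calc ‖R k‖ ^ 2 ≤ (M / 2 * ‖h k‖ ^ 2) ^ 2 := by
            exact pow_le_pow_left₀ (norm_nonneg _) h1 2
        _ = (M / 2) ^ 2 * (‖h k‖ ^ 2) ^ 2 := by ring
    calc vnormSq R ≤ ∑ k, (M / 2) ^ 2 * (‖h k‖ ^ 2) ^ 2 :=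
          Finset.sum_le_sum (fun k _ => e6 k)
      _ = (M / 2) ^ 2 * ∑ k, (‖h k‖ ^ 2) ^ 2 := by rw [Finset.mul_sum]
      _ ≤ (M / 2) ^ 2 * (∑ k, ‖h k‖ ^ 2) ^ 2 := by
          gcongr
          exact Finset.sum_sq_le_sq_sum_of_nonneg (fun k _ => sq_nonneg _)
      _ = (M / 2) ^ 2 * (vnormSq h) ^ 2 := rfl
  have step3 : vnormSq h = r ^ 2 * vnormSq (z j) := by
    unfold vnormSq
    rw [Finset.mul_sum]
    congr 1; funext k
    rw [hh]
    simp only [norm_mul, Complex.norm_real, Real.norm_of_nonneg hr.le]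
    ring
  calc vnormSq (fun i => Wmap θ Cs (w + z) j i - Wmap θ Cs w j i - Wderiv θ Cs w z j i)
      = c ^ 2 * vnormSq (leray j R) := step1
    _ ≤ c ^ 2 * vnormSq R := by gcongr; exact vnormSq_leray_le hj R
    _ ≤ c ^ 2 * ((M / 2) ^ 2 * (vnormSq h) ^ 2) := mul_le_mul_of_nonneg_left step2 (sq_nonneg c)
    _ = c ^ 2 * ((M / 2) ^ 2 * (r ^ 2 * vnormSq (z j)) ^ 2) := by rw [step3]
    _ = (M / (2 * Cs)) ^ 2 * (vnormSq (z j) * ((znorm j) ^ 6 * vnormSq (z j))) := by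
        rw [hcdef, hrdef]
        field_simp

/-- Quadratic estimate for the Taylor remainder of the truncation map: if `θ` is `C²`
in the real sense with `‖D²θ(ξ)‖ ≤ M` everywhere, then
`Σ_{j≠0} |W(w+z)_j − W(w)_j − (W′(w)z)_j|² ≤ (M/(2C*))² (Σ_{j≠0}|z_j|²)(Σ_{j≠0}|j|⁶|z_j|²)`,
i.e. `‖W(w₁) − W(w₂) − W′(w₁)(w₁−w₂)‖_H ≤ (M/(2C*)) ‖w₁−w₂‖_H ‖w₁−w₂‖_{H³}`. -/
theorem Wmap_taylor_remainder (θ : ℂ → ℂ) (M : ℝ) (hsmooth : ContDiff ℝ 2 θ)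
    (hbd : ∀ ξ : ℂ, ‖fderiv ℝ (fderiv ℝ θ) ξ‖ ≤ M) (Cs : ℝ) (hCs : 0 < Cs)
    (w z : (Fin 3 → ℤ) → (Fin 3 → ℂ)) :
    (∑' j : {j : Fin 3 → ℤ // j ≠ 0},
        ENNReal.ofReal (vnormSq (fun i =>
          Wmap θ Cs (w + z) j.1 i - Wmap θ Cs w j.1 i - Wderiv θ Cs w z j.1 i))) ≤
      ENNReal.ofReal ((M / (2 * Cs)) ^ 2) *
        (∑' j : {j : Fin 3 → ℤ // j ≠ 0}, ENNReal.ofReal (vnormSq (z j.1))) *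
        ∑' j : {j : Fin 3 → ℤ // j ≠ 0},
          ENNReal.ofReal ((znorm j.1) ^ 6 * vnormSq (z j.1)) := by
  have hM : 0 ≤ M := le_trans (by positivity) (hbd 0)
  have key : ∀ j : {j : Fin 3 → ℤ // j ≠ 0},
      ENNReal.ofReal (vnormSq (fun i =>
          Wmap θ Cs (w + z) j.1 i - Wmap θ Cs w j.1 i - Wderiv θ Cs w z j.1 i)) ≤
        ENNReal.ofReal ((M / (2 * Cs)) ^ 2) *
          (ENNReal.ofReal (vnormSq (z j.1)) *
            ENNReal.ofReal ((znorm j.1) ^ 6 * vnormSq (z j.1))) := by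
    intro j
    have hb := pointwise_bound θ M hsmooth hbd Cs hCs w z j.1 j.2
    have h1 : ENNReal.ofReal (vnormSq (fun i =>
        Wmap θ Cs (w + z) j.1 i - Wmap θ Cs w j.1 i - Wderiv θ Cs w z j.1 i)) ≤
        ENNReal.ofReal ((M / (2 * Cs)) ^ 2 *
          (vnormSq (z j.1) * ((znorm j.1) ^ 6 * vnormSq (z j.1)))) :=
      ENNReal.ofReal_le_ofReal hb
    refine h1.trans (le_of_eq ?_)
    rw [ENNReal.ofReal_mul (by positivity), ENNReal.ofReal_mul (vnormSq_nonneg _)]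
  calc (∑' j : {j : Fin 3 → ℤ // j ≠ 0},
        ENNReal.ofReal (vnormSq (fun i =>
          Wmap θ Cs (w + z) j.1 i - Wmap θ Cs w j.1 i - Wderiv θ Cs w z j.1 i)))
      ≤ ∑' j : {j : Fin 3 → ℤ // j ≠ 0},
          ENNReal.ofReal ((M / (2 * Cs)) ^ 2) *
            (ENNReal.ofReal (vnormSq (z j.1)) *
              ENNReal.ofReal ((znorm j.1) ^ 6 * vnormSq (z j.1))) :=
        ENNReal.tsum_le_tsum key
    _ = ENNReal.ofReal ((M / (2 * Cs)) ^ 2) *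
          ∑' j : {j : Fin 3 → ℤ // j ≠ 0},
            ENNReal.ofReal (vnormSq (z j.1)) *
              ENNReal.ofReal ((znorm j.1) ^ 6 * vnormSq (z j.1)) :=
        ENNReal.tsum_mul_left
    _ ≤ ENNReal.ofReal ((M / (2 * Cs)) ^ 2) *
          ∑' j : {j : Fin 3 → ℤ // j ≠ 0},
            ENNReal.ofReal (vnormSq (z j.1)) *
              ∑' j' : {j : Fin 3 → ℤ // j ≠ 0},
                ENNReal.ofReal ((znorm j'.1) ^ 6 * vnormSq (z j'.1)) := by
        gcongr with j
        exact ENNReal.le_tsum j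
    _ = ENNReal.ofReal ((M / (2 * Cs)) ^ 2) *
        (∑' j : {j : Fin 3 → ℤ // j ≠ 0}, ENNReal.ofReal (vnormSq (z j.1))) *
        ∑' j : {j : Fin 3 → ℤ // j ≠ 0},
          ENNReal.ofReal ((znorm j.1) ^ 6 * vnormSq (z j.1)) := by
        rw [ENNReal.tsum_mul_right, mul_assoc]

end
end

section
/- Let a : ℤ³ → ℂ satisfy Σ_j |a_j|² < ∞ and let b : ℤ³ → ℂ satisfy b_0 = 0 and Σ_{l≠0} |l|⁶ |b_l|² < ∞. Then the constant C₀ = Σ_{l∈ℤ³, l≠0} |l|⁻⁴ is finite, for every j ∈ ℤ³ the series Σ_l |l| |a_{j−l}| |b_l| converges, and Σ_{j∈ℤ³} (Σ_{l∈ℤ³} |l| |a_{j−l}| |b_l|)² ≤ C₀ (Σ_{j∈ℤ³} |a_j|²) (Σ_{l≠0} |l|⁶ |b_l|²). -/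
set_option maxHeartbeats 1000000

noncomputable section

lemma znorm_sq (j : Fin 3 → ℤ) : znorm j ^ 2 = znormSq j :=
  Real.sq_sqrt (znormSq_nonneg j)

lemma znorm_zero : znorm 0 = 0 := by
  simp [znorm, znormSq]

lemma sq_le_znormSq (j : Fin 3 → ℤ) (i : Fin 3) : ((j i : ℝ))^2 ≤ znormSq j :=
  Finset.single_le_sum (f := fun i => ((j i : ℝ))^2) (fun _ _ => sq_nonneg _)
    (Finset.mem_univ i)

lemma one_le_znormSq {j : Fin 3 → ℤ} (h : j ≠ 0) : 1 ≤ znormSq j := by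
  obtain ⟨i, hi⟩ := Function.ne_iff.mp h
  have h1 : (1 : ℤ) ≤ |j i| := Int.one_le_abs (by simpa using hi)
  have h2 : (1 : ℝ) ≤ ((j i : ℝ))^2 := by
    have : (1 : ℤ) ≤ (j i)^2 := by nlinarith [sq_abs (j i)]
    exact_mod_cast this
  exact h2.trans (sq_le_znormSq j i)

/-- Cauchy–Schwarz for infinite sums of nonnegative reals. -/
lemma tsum_cauchy_schwarz {ι : Type*} {f g : ι → ℝ} (hf0 : ∀ i, 0 ≤ f i) (hg0 : ∀ i, 0 ≤ g i)
    (hf : Summable (fun i => f i ^ 2)) (hg : Summable (fun i => g i ^ 2)) :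
    Summable (fun i => f i * g i) ∧
      (∑' i, f i * g i) ^ 2 ≤ (∑' i, f i ^ 2) * (∑' i, g i ^ 2) := by
  have hs : Summable (fun i => f i * g i) := by
    apply Summable.of_nonneg_of_le (fun i => mul_nonneg (hf0 i) (hg0 i))
      (fun i => ?_) ((hf.add hg).div_const 2)
    nlinarith [sq_nonneg (f i - g i)]
  refine ⟨hs, ?_⟩
  have h1 : 0 ≤ (∑' i, f i ^ 2) * (∑' i, g i ^ 2) :=
    mul_nonneg (tsum_nonneg fun _ => sq_nonneg _) (tsum_nonneg fun _ => sq_nonneg _)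
  have h2 : ∑' i, f i * g i ≤ Real.sqrt ((∑' i, f i ^ 2) * (∑' i, g i ^ 2)) := by
    apply Summable.tsum_le_of_sum_le hs
    intro s
    rw [Real.le_sqrt (Finset.sum_nonneg fun i _ => mul_nonneg (hf0 i) (hg0 i)) h1]
    calc (∑ i ∈ s, f i * g i) ^ 2 ≤ (∑ i ∈ s, f i ^ 2) * ∑ i ∈ s, g i ^ 2 :=
          Finset.sum_mul_sq_le_sq_mul_sq s f g
      _ ≤ (∑' i, f i ^ 2) * (∑' i, g i ^ 2) :=
          mul_le_mul (Summable.sum_le_tsum s (fun i _ => sq_nonneg _) hf)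
            (Summable.sum_le_tsum s (fun i _ => sq_nonneg _) hg)
            (Finset.sum_nonneg fun i _ => sq_nonneg _)
            (tsum_nonneg fun _ => sq_nonneg _)
  calc (∑' i, f i * g i) ^ 2
      ≤ Real.sqrt ((∑' i, f i ^ 2) * (∑' i, g i ^ 2)) ^ 2 :=
        pow_le_pow_left₀ (tsum_nonneg fun i => mul_nonneg (hf0 i) (hg0 i)) h2 2
    _ = _ := Real.sq_sqrt h1

lemma support_subset_ne_zero {f : (Fin 3 → ℤ) → ℝ} (h0 : f 0 = 0) :
    Function.support f ⊆ {l | l ≠ 0} := by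
  intro l hl
  simp only [Set.mem_setOf_eq]
  rintro rfl
  exact hl h0

lemma summable_subtype_ne_zero_iff {f : (Fin 3 → ℤ) → ℝ} (h0 : f 0 = 0) :
    Summable (fun l : {l : Fin 3 → ℤ // l ≠ 0} => f l.1) ↔ Summable f := by
  rw [show (fun l : {l : Fin 3 → ℤ // l ≠ 0} => f l.1)
      = f ∘ ((↑) : {l : Fin 3 → ℤ | l ≠ 0} → (Fin 3 → ℤ)) from rfl,
]
  exact (summable_subtype_iff_indicator (s := {l : Fin 3 → ℤ | l ≠ 0})).trans
    (by rw [Set.indicator_eq_self.2 (support_subset_ne_zero h0)])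

lemma tsum_subtype_ne_zero {f : (Fin 3 → ℤ) → ℝ} (h0 : f 0 = 0) :
    (∑' l : {l : Fin 3 → ℤ // l ≠ 0}, f l.1) = ∑' l, f l :=
  tsum_subtype_eq_of_support_subset (support_subset_ne_zero h0)

lemma summable_u : Summable (fun n : ℤ => (1 + (n : ℝ)^2) ^ (-(2/3 : ℝ))) := by
  have key := (Real.summable_one_div_int_add_rpow (1/2) (4/3)).mpr (by norm_num)
  apply Summable.of_nonneg_of_le (fun n => Real.rpow_nonneg (by positivity) _) (fun n => ?_)
    (key.mul_left ((2:ℝ) ^ ((2:ℝ)/3)))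
  set x : ℝ := |(n : ℝ) + 1/2| with hx_def
  have hxpos : (0 : ℝ) < x := by
    rcases le_or_gt 0 n with h | h
    · have : (0:ℝ) ≤ n := by exact_mod_cast h
      rw [hx_def, abs_of_pos (by linarith)]; linarith
    · have hn1 : n ≤ -1 := by omega
      have : (n:ℝ) ≤ -1 := by exact_mod_cast hn1
      rw [hx_def, abs_of_neg (by linarith)]; linarith
  have hp : (0:ℝ) < 1 + (n:ℝ)^2 := by positivity
  have hx2 : x ^ (2:ℕ) ≤ 2 * (1 + (n:ℝ)^2) := by
    rw [hx_def, sq_abs]; nlinarith [sq_nonneg ((n:ℝ) - 1/2)]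
  have hx43 : x ^ ((4:ℝ)/3) ≤ 2 ^ ((2:ℝ)/3) * (1 + (n:ℝ)^2) ^ ((2:ℝ)/3) := by
    have h1 : x ^ ((4:ℝ)/3) = (x ^ (2:ℕ)) ^ ((2:ℝ)/3) := by
      rw [← Real.rpow_natCast x 2, ← Real.rpow_mul (abs_nonneg _)]; norm_num; rfl
    rw [h1, ← Real.mul_rpow (by norm_num) hp.le]
    exact Real.rpow_le_rpow (by positivity) hx2 (by norm_num)
  have hgoal : ((1 + (n:ℝ)^2) ^ ((2:ℝ)/3))⁻¹ ≤ 2 ^ ((2:ℝ)/3) * (1 / x ^ ((4:ℝ)/3)) := by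
    rw [one_div, ← div_eq_mul_inv, le_div_iff₀ (Real.rpow_pos_of_pos hxpos _),
      inv_mul_eq_div, div_le_iff₀ (Real.rpow_pos_of_pos hp _)]
    linarith
  calc (1 + (n:ℝ)^2) ^ (-(2/3 : ℝ)) = ((1 + (n:ℝ)^2) ^ ((2:ℝ)/3))⁻¹ := by
        rw [← Real.rpow_neg hp.le]
    _ ≤ _ := hgoal

def e3 : (Fin 3 → ℤ) ≃ ℤ × ℤ × ℤ where
  toFun l := (l 0, l 1, l 2)
  invFun p := ![p.1, p.2.1, p.2.2]
  left_inv l := by funext i; fin_cases i <;> simp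
  right_inv p := rfl

/-- shift equivalence on the product lattice -/
def eshift : ((Fin 3 → ℤ) × (Fin 3 → ℤ)) ≃ ((Fin 3 → ℤ) × (Fin 3 → ℤ)) where
  toFun p := (p.1 + p.2, p.2)
  invFun p := (p.1 - p.2, p.2)
  left_inv p := by simp
  right_inv p := by simp

lemma summable_inv_pow4 :
    Summable (fun l : {l : Fin 3 → ℤ // l ≠ 0} => ((znorm l.1) ^ 4)⁻¹) := by
  set u : ℤ → ℝ := fun n => (1 + (n : ℝ)^2) ^ (-(2/3 : ℝ)) with hu_def
  have hu0 : ∀ n, 0 ≤ u n := fun n => Real.rpow_nonneg (by positivity) _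
  have hu : Summable u := summable_u
  have hprod : Summable (fun l : Fin 3 → ℤ => u (l 0) * (u (l 1) * u (l 2))) := by
    have h2 : Summable (fun p : ℤ × ℤ => u p.1 * u p.2) :=
      hu.mul_of_nonneg hu hu0 hu0
    have h3 : Summable (fun p : ℤ × ℤ × ℤ => u p.1 * (u p.2.1 * u p.2.2)) :=
      hu.mul_of_nonneg h2 hu0 (fun p => mul_nonneg (hu0 _) (hu0 _))
    exact ((e3.summable_iff (f := fun p : ℤ × ℤ × ℤ => u p.1 * (u p.2.1 * u p.2.2))).2 h3)
  apply Summable.of_nonneg_of_le (fun l => inv_nonneg.2 (pow_nonneg (znorm_nonneg _) _)) (fun l => ?_)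
    (((hprod.mul_left 4)).subtype _)
  -- per-element bound
  obtain ⟨l, hl⟩ := l
  set S : ℝ := znormSq l with hS_def
  have hS1 : 1 ≤ S := one_le_znormSq hl
  have hS0 : (0:ℝ) < S := by linarith
  have hzn4 : znorm l ^ 4 = S ^ 2 := by
    rw [show (4:ℕ) = 2 * 2 from rfl, pow_mul, znorm_sq]
  have hp : ∀ i : Fin 3, (0:ℝ) < 1 + ((l i : ℝ))^2 := fun i => by positivity
  have hple : ∀ i : Fin 3, 1 + ((l i : ℝ))^2 ≤ 2 * S := fun i => by
    have := sq_le_znormSq l i; rw [← hS_def] at this; linarith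
  set P : ℝ := (1 + ((l 0 : ℝ))^2) * ((1 + ((l 1 : ℝ))^2) * (1 + ((l 2 : ℝ))^2)) with hP_def
  have hP0 : (0:ℝ) < P := by
    rw [hP_def]; exact mul_pos (hp 0) (mul_pos (hp 1) (hp 2))
  have hPle : P ≤ 8 * S ^ 3 := by
    calc P ≤ (2*S) * ((1 + ((l 1 : ℝ))^2) * (1 + ((l 2 : ℝ))^2)) :=
          mul_le_mul_of_nonneg_right (hple 0) (mul_nonneg (hp 1).le (hp 2).le)
      _ ≤ (2*S) * ((2*S) * (2*S)) := by
          refine mul_le_mul_of_nonneg_left ?_ (by linarith)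
          exact mul_le_mul (hple 1) (hple 2) (hp 2).le (by linarith)
      _ = 8 * S ^ 3 := by ring
  have hP23 : P ^ ((2:ℝ)/3) ≤ 4 * S ^ 2 := by
    have h1 : P ^ ((2:ℝ)/3) ≤ (8 * S ^ 3) ^ ((2:ℝ)/3) :=
      Real.rpow_le_rpow hP0.le hPle (by norm_num)
    have h2 : (8 * S ^ 3 : ℝ) ^ ((2:ℝ)/3) = 4 * S ^ 2 := by
      rw [Real.mul_rpow (by norm_num) (by positivity)]
      have h8 : (8:ℝ) ^ ((2:ℝ)/3) = 4 := by
        rw [show (8:ℝ) = 2 ^ (3:ℕ) by norm_num, ← Real.rpow_natCast 2 3,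
          ← Real.rpow_mul (by norm_num)]
        rw [show ((3:ℕ):ℝ) * (2/3) = ((2:ℕ):ℝ) by norm_num, Real.rpow_natCast]
        norm_num
      have hS3 : (S ^ (3:ℕ)) ^ ((2:ℝ)/3) = S ^ (2:ℕ) := by
        rw [← Real.rpow_natCast S 3, ← Real.rpow_mul hS0.le,
          show ((3:ℕ):ℝ) * (2/3) = ((2:ℕ):ℝ) by norm_num, Real.rpow_natCast]
      rw [h8, hS3]
    linarith [h1.trans_eq h2]
  have hPu : u (l 0) * (u (l 1) * u (l 2)) = P ^ (-(2/3:ℝ)) := by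
    simp only [hu_def, hP_def]
    rw [← Real.mul_rpow (hp 1).le (hp 2).le,
      ← Real.mul_rpow (hp 0).le (mul_pos (hp 1) (hp 2)).le]
  simp only [Function.comp]
  rw [hzn4, hPu, Real.rpow_neg hP0.le]
  have hiv : ((4:ℝ) * S ^ 2)⁻¹ ≤ (P ^ ((2:ℝ)/3))⁻¹ :=
    inv_anti₀ (Real.rpow_pos_of_pos hP0 _) hP23
  have heq : (S ^ 2)⁻¹ = 4 * ((4:ℝ) * S ^ 2)⁻¹ := by
    rw [mul_inv, ← mul_assoc]; norm_num
  rw [heq]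
  exact mul_le_mul_of_nonneg_left hiv (by norm_num)

/-- Fourier-coefficient form of the bilinear estimate
`‖(p·∇)q‖_{L²} ≤ C ‖p‖_{L²} ‖q‖_{H³}`: if `Σ_j |a_j|² < ∞`, `b_0 = 0` and
`Σ_{l≠0} |l|⁶ |b_l|² < ∞`, then `C₀ = Σ_{l≠0} |l|⁻⁴` is finite, each convolution
`Σ_l |l| |a_{j−l}| |b_l|` converges, and
`Σ_j (Σ_l |l| |a_{j−l}| |b_l|)² ≤ C₀ (Σ_j |a_j|²) (Σ_{l≠0} |l|⁶ |b_l|²)`. -/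
theorem convolution_bilinear_estimate (a b : (Fin 3 → ℤ) → ℂ)
    (ha : Summable (fun j : Fin 3 → ℤ => ‖a j‖ ^ 2))
    (hb0 : b 0 = 0)
    (hb : Summable (fun l : {l : Fin 3 → ℤ // l ≠ 0} =>
      (znorm l.1) ^ 6 * ‖b l.1‖ ^ 2)) :
    Summable (fun l : {l : Fin 3 → ℤ // l ≠ 0} => ((znorm l.1) ^ 4)⁻¹) ∧
    (∀ j : Fin 3 → ℤ, Summable (fun l : Fin 3 → ℤ =>
      znorm l * ‖a (j - l)‖ * ‖b l‖)) ∧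
    Summable (fun j : Fin 3 → ℤ =>
      (∑' l : Fin 3 → ℤ, znorm l * ‖a (j - l)‖ * ‖b l‖) ^ 2) ∧
    (∑' j : Fin 3 → ℤ,
        (∑' l : Fin 3 → ℤ, znorm l * ‖a (j - l)‖ * ‖b l‖) ^ 2) ≤
      (∑' l : {l : Fin 3 → ℤ // l ≠ 0}, ((znorm l.1) ^ 4)⁻¹) *
        (∑' j : Fin 3 → ℤ, ‖a j‖ ^ 2) *
        ∑' l : {l : Fin 3 → ℤ // l ≠ 0}, (znorm l.1) ^ 6 * ‖b l.1‖ ^ 2 := by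
  have hC := summable_inv_pow4
  set A : (Fin 3 → ℤ) → ℝ := fun j => ‖a j‖ with hA_def
  set B : (Fin 3 → ℤ) → ℝ := fun l => ‖b l‖ with hB_def
  have hA0 : ∀ j, 0 ≤ A j := fun j => norm_nonneg _
  have hB0 : ∀ l, 0 ≤ B l := fun l => norm_nonneg _
  have hB00 : B 0 = 0 := by simp [hB_def, hb0]
  -- h : extension of the weight over the full lattice
  set h : (Fin 3 → ℤ) → ℝ := fun l => znorm l ^ 6 * B l ^ 2 with hh_def
  have hh00 : h 0 = 0 := by simp [hh_def, znorm_zero]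
  have hh : Summable h := (summable_subtype_ne_zero_iff hh00).1 hb
  have hh0 : ∀ l, 0 ≤ h l := fun l => mul_nonneg (pow_nonneg (znorm_nonneg _) _) (sq_nonneg _)
  have hhsum : (∑' l, h l) = ∑' l : {l : Fin 3 → ℤ // l ≠ 0}, znorm l.1 ^ 6 * B l.1 ^ 2 :=
    (tsum_subtype_ne_zero hh00).symm
  -- C₀ over the full lattice
  set c : (Fin 3 → ℤ) → ℝ := fun l => ((znorm l) ^ 4)⁻¹ with hc_def
  have hc00 : c 0 = 0 := by simp [hc_def, znorm_zero]
  have hcS : Summable c := (summable_subtype_ne_zero_iff hc00).1 hC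
  have hcsum : (∑' l, c l) = ∑' l : {l : Fin 3 → ℤ // l ≠ 0}, ((znorm l.1) ^ 4)⁻¹ :=
    (tsum_subtype_ne_zero hc00).symm
  have hc0 : ∀ l, 0 ≤ c l := fun l => inv_nonneg.2 (pow_nonneg (znorm_nonneg _) _)
  -- the double-indexed weight
  set G : ((Fin 3 → ℤ) × (Fin 3 → ℤ)) → ℝ := fun p => h p.2 * A (p.1 - p.2) ^ 2 with hG_def
  have hG0 : 0 ≤ G := fun p => mul_nonneg (hh0 _) (sq_nonneg _)
  have hGsum : Summable G := by
    have h1 : Summable (fun p : (Fin 3 → ℤ) × (Fin 3 → ℤ) => A p.1 ^ 2 * h p.2) :=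
      ha.mul_of_nonneg hh (fun j => sq_nonneg _) hh0
    have h2 : Summable (fun p : (Fin 3 → ℤ) × (Fin 3 → ℤ) => h p.2 * A p.1 ^ 2) :=
      h1.congr (fun p => mul_comm _ _)
    have h3 : Summable (G ∘ eshift) := by
      apply h2.congr
      intro p
      simp only [hG_def, Function.comp, eshift, Equiv.coe_fn_mk, add_sub_cancel_right]
    exact (Equiv.summable_iff eshift).1 h3
  have hGj : ∀ j, Summable (fun l => G (j, l)) := fun j => hGsum.prod_factor j
  have hT : Summable (fun j => ∑' l, G (j, l)) :=
    ((summable_prod_of_nonneg hG0).1 hGsum).2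
  have hT0 : ∀ j, 0 ≤ ∑' l, G (j, l) := fun j => tsum_nonneg (fun l => hG0 (j, l))
  -- total of the double sum
  have hTsum : (∑' j, ∑' l, G (j, l)) = (∑' l, h l) * (∑' j, A j ^ 2) := by
    rw [← Summable.tsum_prod hGsum]
    have e1 : (∑' p, G p) = ∑' p : (Fin 3 → ℤ) × (Fin 3 → ℤ), h p.2 * A p.1 ^ 2 := by
      rw [← Equiv.tsum_eq eshift G]
      apply tsum_congr
      intro p
      simp only [hG_def, eshift, Equiv.coe_fn_mk, add_sub_cancel_right]
    rw [e1]
    have h2 : Summable (fun p : (Fin 3 → ℤ) × (Fin 3 → ℤ) => h p.2 * A p.1 ^ 2) :=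
      (ha.mul_of_nonneg hh (fun j => sq_nonneg _) hh0).congr (fun p => mul_comm _ _)
    rw [Summable.tsum_prod h2]
    calc (∑' k, ∑' l, h l * A k ^ 2) = ∑' k, (∑' l, h l) * A k ^ 2 := by
          refine tsum_congr fun k => ?_
          exact tsum_mul_right
      _ = (∑' l, h l) * ∑' k, A k ^ 2 := tsum_mul_left
  -- per-j Cauchy–Schwarz
  have key : ∀ j : Fin 3 → ℤ,
      Summable (fun l : Fin 3 → ℤ => znorm l * A (j - l) * B l) ∧
      (∑' l, znorm l * A (j - l) * B l) ^ 2 ≤ (∑' l, c l) * ∑' l, G (j, l) := by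
    intro j
    set g : (Fin 3 → ℤ) → ℝ := fun l => znorm l ^ 3 * B l * A (j - l) with hg_def
    set f : (Fin 3 → ℤ) → ℝ := fun l => ((znorm l) ^ 2)⁻¹ with hf_def
    have hf0 : ∀ l, 0 ≤ f l := fun l => inv_nonneg.2 (pow_nonneg (znorm_nonneg _) _)
    have hg0 : ∀ l, 0 ≤ g l :=
      fun l => mul_nonneg (mul_nonneg (pow_nonneg (znorm_nonneg _) _) (hB0 l)) (hA0 _)
    have hf2 : (fun l => f l ^ 2) = c := by
      funext l
      simp only [hf_def, hc_def, ← inv_pow, ← pow_mul]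
    have hg2 : (fun l => g l ^ 2) = fun l => G (j, l) := by
      funext l
      simp only [hg_def, hG_def, hh_def]
      ring
    have hfs : Summable (fun l => f l ^ 2) := by rw [hf2]; exact hcS
    have hgs : Summable (fun l => g l ^ 2) := by rw [hg2]; exact hGj j
    obtain ⟨hs, hle⟩ := tsum_cauchy_schwarz hf0 hg0 hfs hgs
    have hfg : ∀ l, znorm l * A (j - l) * B l = f l * g l := by
      intro l
      by_cases hl : l = 0
      · subst hl; simp [hf_def, hg_def, znorm_zero]
      · have hz : 0 < znorm l := lt_of_lt_of_le one_pos
          (by rw [znorm, show (1:ℝ) = Real.sqrt 1 by simp]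
              exact Real.sqrt_le_sqrt (one_le_znormSq hl))
        simp only [hf_def, hg_def]
        field_simp
    refine ⟨hs.congr (fun l => (hfg l).symm), ?_⟩
    calc (∑' l, znorm l * A (j - l) * B l) ^ 2 = (∑' l, f l * g l) ^ 2 := by
          rw [tsum_congr hfg]
      _ ≤ (∑' l, f l ^ 2) * ∑' l, g l ^ 2 := hle
      _ = (∑' l, c l) * ∑' l, G (j, l) := by rw [hf2, hg2]
  refine ⟨hC, fun j => (key j).1, ?_, ?_⟩
  · apply Summable.of_nonneg_of_le (fun j => sq_nonneg _) (fun j => (key j).2)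
    exact hT.mul_left _
  · calc (∑' j, (∑' l, znorm l * A (j - l) * B l) ^ 2)
        ≤ ∑' j, (∑' l, c l) * ∑' l, G (j, l) := by
          apply Summable.tsum_le_tsum (fun j => (key j).2)
          · apply Summable.of_nonneg_of_le (fun j => sq_nonneg _) (fun j => (key j).2)
            exact hT.mul_left _
          · exact hT.mul_left _
      _ = (∑' l, c l) * ∑' j, ∑' l, G (j, l) := tsum_mul_left
      _ = (∑' l, c l) * ((∑' l, h l) * (∑' j, A j ^ 2)) := by rw [hTsum]
      _ = (∑' l : {l : Fin 3 → ℤ // l ≠ 0}, ((znorm l.1) ^ 4)⁻¹) *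
            (∑' j, A j ^ 2) *
            ∑' l : {l : Fin 3 → ℤ // l ≠ 0}, znorm l.1 ^ 6 * B l.1 ^ 2 := by
          rw [hcsum, hhsum]; ring

end
end

section
/- Let k, ρ > 0 and N ∈ ℕ be such that for all l, m ∈ C_N^k, |l − m|² ≤ ρ implies l = m. Let a, b : ℤ³ → ℂ with a_l = 0 for every l ∉ C_N^k, with b_0 = 0, and with Σ_l |b_l| < ∞. Then for every j ∈ C_N^k one has Σ_{l∈ℤ³} a_l b_{j−l} = Σ_{l∈ℤ³, |j−l|²>ρ} a_l b_{j−l}; i.e., on the intermediate modes the convolution of a spectrally localized factor with b only involves the high-frequency part b_{>ρ} of b. -/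
noncomputable section

/-- Membership in the intermediate shell `C_N^k = {l ∈ ℤ³ : N − k ≤ |l|² ≤ N + k}`. -/
def inShell (N : ℕ) (k : ℝ) (l : Fin 3 → ℤ) : Prop :=
  (N : ℝ) - k ≤ znormSq l ∧ znormSq l ≤ (N : ℝ) + k

/-- If the difference set of `C_N^k` meets `B_ρ` only in zero, `a` is supported in
`C_N^k`, `b_0 = 0` and `b` is absolutely summable, then on intermediate modes
`j ∈ C_N^k` the convolution `Σ_l a_l b_{j−l}` only involves the high-frequency part of
`b`: it equals `Σ_{|j−l|²>ρ} a_l b_{j−l}`. -/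
theorem convolution_high_frequency_only (k ρ : ℝ) (hk : 0 < k) (hρ : 0 < ρ) (N : ℕ)
    (hsep : ∀ l m : Fin 3 → ℤ, inShell N k l → inShell N k m →
      znormSq (l - m) ≤ ρ → l = m)
    (a b : (Fin 3 → ℤ) → ℂ)
    (ha : ∀ l : Fin 3 → ℤ, ¬ inShell N k l → a l = 0)
    (hb0 : b 0 = 0)
    (hb : Summable (fun l : Fin 3 → ℤ => ‖b l‖)) :
    ∀ j : Fin 3 → ℤ, inShell N k j →
      (∑' l : Fin 3 → ℤ, a l * b (j - l)) =
        ∑' l : {l : Fin 3 → ℤ // ρ < znormSq (j - l)}, a l.1 * b (j - l.1) := by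
  intro j hj
  refine (tsum_subtype_eq_of_support_subset ?_).symm
  intro l hl
  simp only [Function.mem_support, ne_eq] at hl
  by_contra h
  have h : znormSq (j - l) ≤ ρ := not_lt.1 h
  rcases eq_or_ne (a l) 0 with h0 | h0
  · exact hl (by rw [h0, zero_mul])
  · have hlS : inShell N k l := by
      by_contra hc; exact h0 (ha l hc)
    have : j = l := hsep j l hj hlS h
    apply hl
    rw [this, sub_self, hb0, mul_zero]

end
end
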